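/- arXiv:0802.0030 — 5 statements merged into one kernel-verified Lean document; each statement's English description precedes it below -/
import Mathlib

section
/- Let S, Z, W1, W2, U, V be random variables on a probability space with values in finite nonempty sets, and let t ≥ 0 be a real number. Suppose H(S | W1, W2, Z) = 0, H(S) ≥ H(Z) + 2t, H(W1, W2 | U, V) = 0, and H(U, V) ≤ 2t. Then H(W1, W2) = 2t, H(U, V) = 2t, and H(U, V | W1, W2) = 0 (so the pair (U, V) is a function of (W1, W2)). -/
open MeasureTheory ProbabilityTheory

/-- Shannon entropy (natural logarithm) of a random variable with values in a finite type,
computed from the law `μ.map X`. -/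
noncomputable def ent {Ω : Type*} [MeasurableSpace Ω] {S : Type*} [Fintype S] [MeasurableSpace S]
    (μ : Measure Ω) (X : Ω → S) : ℝ :=
  ∑ s : S, Real.negMulLog ((μ.map X) {s}).toReal

/-- Conditional entropy `H(X | Y) = H(X, Y) - H(Y)`. -/
noncomputable def condEnt {Ω S T : Type*} [MeasurableSpace Ω] [Fintype S] [MeasurableSpace S]
    [Fintype T] [MeasurableSpace T] (μ : Measure Ω) (X : Ω → S) (Y : Ω → T) : ℝ :=
  ent μ (fun ω => (X ω, Y ω)) - ent μ Y

/-- Mutual information `I(X ; Y) = H(X) + H(Y) - H(X, Y)`. -/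
noncomputable def mutInfo {Ω S T : Type*} [MeasurableSpace Ω] [Fintype S] [MeasurableSpace S]
    [Fintype T] [MeasurableSpace T] (μ : Measure Ω) (X : Ω → S) (Y : Ω → T) : ℝ :=
  ent μ X + ent μ Y - ent μ (fun ω => (X ω, Y ω))

/-- Conditional mutual information `I(X ; Y | Z) = H(X | Z) + H(Y | Z) - H(X, Y | Z)`. -/
noncomputable def condMutInfo {Ω S T U : Type*} [MeasurableSpace Ω] [Fintype S] [MeasurableSpace S]
    [Fintype T] [MeasurableSpace T] [Fintype U] [MeasurableSpace U]
    (μ : Measure Ω) (X : Ω → S) (Y : Ω → T) (Z : Ω → U) : ℝ :=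
  condEnt μ X Z + condEnt μ Y Z - condEnt μ (fun ω => (X ω, Y ω)) Z

open Real
section Aux

variable {Ω : Type*} [MeasurableSpace Ω] (μ : Measure Ω) [IsProbabilityMeasure μ]
  {S T : Type*} [Fintype S] [MeasurableSpace S] [MeasurableSingletonClass S]
  [Fintype T] [MeasurableSpace T] [MeasurableSingletonClass T]

lemma pmf_apply {X : Ω → S} (hX : Measurable X) (s : S) :
    ((μ.map X) {s}).toReal = (μ (X ⁻¹' {s})).toReal := by
  rw [Measure.map_apply hX (measurableSet_singleton s)]

lemma sum_pmf_eq_one {X : Ω → S} (hX : Measurable X) :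
    ∑ s : S, ((μ.map X) {s}).toReal = 1 := by
  have h : (Set.univ : Set Ω) = ⋃ s ∈ (Finset.univ : Finset S), X ⁻¹' {s} := by
    ext ω; simp
  have hd : (↑(Finset.univ : Finset S) : Set S).PairwiseDisjoint (fun s => X ⁻¹' {s}) := by
    intro a _ b _ hab
    exact Set.disjoint_left.2 (by intro ω h1 h2; exact hab (by simp at h1 h2; rw [← h1, ← h2]))
  have := measure_biUnion_finset (μ := μ) hd (fun s _ => hX (measurableSet_singleton s))
  rw [← h, measure_univ] at this
  have ht : ∀ s ∈ (Finset.univ : Finset S), μ (X ⁻¹' {s}) ≠ ⊤ := fun s _ => measure_ne_top μ _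
  calc ∑ s : S, ((μ.map X) {s}).toReal = ∑ s : S, (μ (X ⁻¹' {s})).toReal := by
        simp_rw [pmf_apply μ hX]
    _ = ((∑ s : S, μ (X ⁻¹' {s}))).toReal := (ENNReal.toReal_sum ht).symm
    _ = 1 := by rw [← this]; simp

lemma marg_snd {X : Ω → S} {Y : Ω → T} (hX : Measurable X) (hY : Measurable Y) (y : T) :
    ((μ.map Y) {y}).toReal
      = ∑ x : S, ((μ.map (fun ω => (X ω, Y ω))) {(x, y)}).toReal := by
  have hXY : Measurable (fun ω => (X ω, Y ω)) := hX.prodMk hY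
  have h : Y ⁻¹' {y} = ⋃ x ∈ (Finset.univ : Finset S),
      (fun ω => (X ω, Y ω)) ⁻¹' {(x, y)} := by
    ext ω
    simp [Prod.ext_iff]
  have hd : (↑(Finset.univ : Finset S) : Set S).PairwiseDisjoint
      (fun x => (fun ω => (X ω, Y ω)) ⁻¹' {(x, y)}) := by
    intro a _ b _ hab
    refine Set.disjoint_left.2 ?_
    intro ω h1 h2
    simp [Prod.ext_iff] at h1 h2
    exact hab (h1.1.symm.trans h2.1)
  have hm := measure_biUnion_finset (μ := μ) hd
    (fun x _ => hXY (measurableSet_singleton _))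
  rw [pmf_apply μ hY, h, hm]
  rw [ENNReal.toReal_sum (fun x _ => measure_ne_top μ _)]
  simp_rw [pmf_apply μ hXY]

lemma ent_comp_inj {X : Ω → S} (hX : Measurable X) {f : S → T} (hf : Function.Injective f) :
    ent μ (f ∘ X) = ent μ X := by
  have hfX : Measurable (f ∘ X) := (measurable_of_countable f).comp hX
  classical
  unfold ent
  rw [← Finset.sum_subset (Finset.subset_univ (Finset.univ.image f))]
  · rw [Finset.sum_image (fun a _ b _ h => hf h)]
    refine Finset.sum_congr rfl (fun x _ => ?_)
    have hset : (f ∘ X) ⁻¹' {f x} = X ⁻¹' {x} := by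
      ext ω; simp [hf.eq_iff]
    rw [pmf_apply μ hfX, pmf_apply μ hX, hset]
  · intro t _ ht
    rw [pmf_apply μ hfX]
    have : (f ∘ X) ⁻¹' {t} = ∅ := by
      ext ω
      simp only [Set.mem_preimage, Set.mem_singleton_iff, Set.mem_empty_iff_false, iff_false]
      intro h
      exact ht (Finset.mem_image.2 ⟨X ω, Finset.mem_univ _, h⟩)
    simp [this]

end Aux

lemma negMulLog_add_le {a b : ℝ} (ha : 0 ≤ a) (hb : 0 ≤ b) :
    negMulLog (a + b) ≤ negMulLog a + negMulLog b := by
  have key : ∀ x y : ℝ, 0 ≤ x → 0 ≤ y → -x * log (x + y) ≤ negMulLog x := by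
    intro x y hx hy
    rcases eq_or_lt_of_le hx with h | h
    · simp [← h]
    · have hlog : log x ≤ log (x + y) := Real.log_le_log h (by linarith)
      simp only [negMulLog, neg_mul]
      nlinarith
  calc negMulLog (a + b) = -a * log (a + b) + -b * log (a + b) := by
        simp only [negMulLog]; ring
    _ ≤ negMulLog a + negMulLog b := by
        have h2 := key b a hb ha
        rw [add_comm b a] at h2
        exact add_le_add (key a b ha hb) h2

lemma negMulLog_sum_le {ι : Type*} (s : Finset ι) (a : ι → ℝ) (h : ∀ i ∈ s, 0 ≤ a i) :
    negMulLog (∑ i ∈ s, a i) ≤ ∑ i ∈ s, negMulLog (a i) := by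
  induction s using Finset.cons_induction with
  | empty => simp
  | cons i s hi ih =>
    rw [Finset.sum_cons, Finset.sum_cons]
    have h1 : 0 ≤ a i := h i (Finset.mem_cons_self _ _)
    have h2 : 0 ≤ ∑ j ∈ s, a j :=
      Finset.sum_nonneg (fun j hj => h j (Finset.mem_cons_of_mem hj))
    exact (negMulLog_add_le h1 h2).trans
      (add_le_add le_rfl (ih (fun j hj => h j (Finset.mem_cons_of_mem hj))))

lemma gibbs {S T : Type*} [Fintype S] [Fintype T] (p : S × T → ℝ)
    (hp : ∀ st, 0 ≤ p st) (hsum : ∑ st, p st = 1) :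
    ∑ st, negMulLog (p st)
      ≤ (∑ x, negMulLog (∑ y, p (x, y))) + ∑ y, negMulLog (∑ x, p (x, y)) := by
  have hsum' : ∑ x, ∑ y, p (x, y) = 1 := by rw [← Fintype.sum_prod_type]; exact hsum
  have hsumb : ∑ y, ∑ x, p (x, y) = 1 := by rw [Finset.sum_comm]; exact hsum'
  have hann : ∀ x, 0 ≤ ∑ y, p (x, y) := fun x => Finset.sum_nonneg fun y _ => hp _
  have hbnn : ∀ y, 0 ≤ ∑ x, p (x, y) := fun y => Finset.sum_nonneg fun x _ => hp _
  have hterm : ∀ x y, negMulLog (p (x, y)) ≤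
      -(p (x, y)) * log (∑ y', p (x, y')) + -(p (x, y)) * log (∑ x', p (x', y))
        + ((∑ y', p (x, y')) * (∑ x', p (x', y)) - p (x, y)) := by
    intro x y
    rcases eq_or_lt_of_le (hp (x, y)) with h | h
    · rw [← h]
      simp only [negMulLog_zero, neg_zero, zero_mul, sub_zero, zero_add]
      exact mul_nonneg (hann x) (hbnn y)
    · have hpa : p (x, y) ≤ ∑ y', p (x, y') :=
        Finset.single_le_sum (fun i _ => hp _) (Finset.mem_univ y)
      have hpb : p (x, y) ≤ ∑ x', p (x', y) :=
        Finset.single_le_sum (f := fun x' => p (x', y)) (fun i _ => hp _) (Finset.mem_univ x)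
      have ha : 0 < ∑ y', p (x, y') := lt_of_lt_of_le h hpa
      have hb : 0 < ∑ x', p (x', y) := lt_of_lt_of_le h hpb
      have hd : 0 < (∑ y', p (x, y')) * (∑ x', p (x', y)) / p (x, y) := by positivity
      have hlog := Real.log_le_sub_one_of_pos hd
      rw [Real.log_div (mul_pos ha hb).ne' (ne_of_gt h),
        Real.log_mul (ne_of_gt ha) (ne_of_gt hb)] at hlog
      have hmul := mul_le_mul_of_nonneg_left hlog (le_of_lt h)
      have hc : p (x, y) * ((∑ y', p (x, y')) * (∑ x', p (x', y)) / p (x, y))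
          = (∑ y', p (x, y')) * (∑ x', p (x', y)) := by
        field_simp
      simp only [negMulLog, neg_mul]
      nlinarith [hmul, hc]
  have step : ∑ x, ∑ y, negMulLog (p (x, y)) ≤
      ∑ x, ∑ y, (-(p (x, y)) * log (∑ y', p (x, y')) + -(p (x, y)) * log (∑ x', p (x', y))
        + ((∑ y', p (x, y')) * (∑ x', p (x', y)) - p (x, y))) :=
    Finset.sum_le_sum fun x _ => Finset.sum_le_sum fun y _ => hterm x y
  rw [Fintype.sum_prod_type]
  refine le_trans step (le_of_eq ?_)
  have split : ∑ x, ∑ y, (-(p (x, y)) * log (∑ y', p (x, y')) + -(p (x, y)) * log (∑ x', p (x', y))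
        + ((∑ y', p (x, y')) * (∑ x', p (x', y)) - p (x, y)))
      = (∑ x, ∑ y, -(p (x, y)) * log (∑ y', p (x, y')))
        + (∑ x, ∑ y, -(p (x, y)) * log (∑ x', p (x', y)))
        + ((∑ x, ∑ y, (∑ y', p (x, y')) * (∑ x', p (x', y))) - ∑ x, ∑ y, p (x, y)) := by
    simp only [Finset.sum_add_distrib, Finset.sum_sub_distrib]
  rw [split]
  have hA : ∑ x, ∑ y, -(p (x, y)) * log (∑ y', p (x, y')) = ∑ x, negMulLog (∑ y, p (x, y)) := by
    refine Finset.sum_congr rfl fun x _ => ?_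
    simp only [negMulLog, neg_mul, ← Finset.sum_neg_distrib, ← Finset.sum_mul]
    rw [Finset.sum_mul]
    simp [neg_mul]
  have hB : ∑ x, ∑ y, -(p (x, y)) * log (∑ x', p (x', y)) = ∑ y, negMulLog (∑ x, p (x, y)) := by
    rw [Finset.sum_comm]
    refine Finset.sum_congr rfl fun y _ => ?_
    simp only [negMulLog, neg_mul, ← Finset.sum_neg_distrib, ← Finset.sum_mul]
    rw [Finset.sum_mul]
    simp [neg_mul]
  have hC : ∑ x, ∑ y, (∑ y', p (x, y')) * (∑ x', p (x', y)) = 1 := by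
    calc ∑ x, ∑ y, (∑ y', p (x, y')) * (∑ x', p (x', y))
        = ∑ x, (∑ y', p (x, y')) * ∑ y, (∑ x', p (x', y)) := by
          refine Finset.sum_congr rfl fun x _ => ?_
          rw [Finset.mul_sum]
      _ = (∑ x, ∑ y', p (x, y')) * ∑ y, ∑ x', p (x', y) := by rw [Finset.sum_mul]
      _ = 1 := by rw [hsum', hsumb, one_mul]
  rw [hA, hB, hC, hsum']
  ring

section Aux2

variable {Ω : Type*} [MeasurableSpace Ω] (μ : Measure Ω) [IsProbabilityMeasure μ]
  {S T : Type*} [Fintype S] [MeasurableSpace S] [MeasurableSingletonClass S]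
  [Fintype T] [MeasurableSpace T] [MeasurableSingletonClass T]

lemma marg_fst {X : Ω → S} {Y : Ω → T} (hX : Measurable X) (hY : Measurable Y) (x : S) :
    ((μ.map X) {x}).toReal
      = ∑ y : T, ((μ.map (fun ω => (X ω, Y ω))) {(x, y)}).toReal := by
  have hXY : Measurable (fun ω => (X ω, Y ω)) := hX.prodMk hY
  have h : X ⁻¹' {x} = ⋃ y ∈ (Finset.univ : Finset T),
      (fun ω => (X ω, Y ω)) ⁻¹' {(x, y)} := by
    ext ω
    simp [Prod.ext_iff]
  have hd : (↑(Finset.univ : Finset T) : Set T).PairwiseDisjoint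
      (fun y => (fun ω => (X ω, Y ω)) ⁻¹' {(x, y)}) := by
    intro a _ b _ hab
    refine Set.disjoint_left.2 ?_
    intro ω h1 h2
    simp [Prod.ext_iff] at h1 h2
    exact hab (h1.2.symm.trans h2.2)
  have hm := measure_biUnion_finset (μ := μ) hd
    (fun y _ => hXY (measurableSet_singleton _))
  rw [pmf_apply μ hX, h, hm]
  rw [ENNReal.toReal_sum (fun y _ => measure_ne_top μ _)]
  simp_rw [pmf_apply μ hXY]

lemma ent_snd_le {X : Ω → S} {Y : Ω → T} (hX : Measurable X) (hY : Measurable Y) :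
    ent μ Y ≤ ent μ (fun ω => (X ω, Y ω)) := by
  unfold ent
  have h : ∑ st : S × T, negMulLog ((μ.map (fun ω => (X ω, Y ω))) {st}).toReal
      = ∑ y : T, ∑ x : S, negMulLog ((μ.map (fun ω => (X ω, Y ω))) {(x, y)}).toReal := by
    rw [Fintype.sum_prod_type, Finset.sum_comm]
  rw [h]
  refine Finset.sum_le_sum fun y _ => ?_
  rw [marg_snd μ hX hY y]
  exact negMulLog_sum_le _ _ (fun x _ => ENNReal.toReal_nonneg)

lemma ent_fst_le {X : Ω → S} {Y : Ω → T} (hX : Measurable X) (hY : Measurable Y) :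
    ent μ X ≤ ent μ (fun ω => (X ω, Y ω)) := by
  have h : ent μ X ≤ ent μ (fun ω => (Y ω, X ω)) := ent_snd_le μ hY hX
  have he : ent μ (fun ω => (Y ω, X ω)) = ent μ (fun ω => (X ω, Y ω)) :=
    ent_comp_inj μ (hX.prodMk hY) (f := Prod.swap) Prod.swap_injective
  linarith

lemma ent_pair_le_add {X : Ω → S} {Y : Ω → T} (hX : Measurable X) (hY : Measurable Y) :
    ent μ (fun ω => (X ω, Y ω)) ≤ ent μ X + ent μ Y := by
  have hXY : Measurable (fun ω => (X ω, Y ω)) := hX.prodMk hY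
  have hg := gibbs (fun st => ((μ.map (fun ω => (X ω, Y ω))) {st}).toReal)
    (fun st => ENNReal.toReal_nonneg) (sum_pmf_eq_one μ hXY)
  unfold ent
  simp only [marg_fst μ hX hY, marg_snd μ hX hY]
  simpa using hg

end Aux2


theorem stmt_3
    {Ω : Type*} [MeasurableSpace Ω] (μ : Measure Ω) [IsProbabilityMeasure μ]
    {SS SZ S1 S2 SU SV : Type*}
    [Fintype SS] [Nonempty SS] [MeasurableSpace SS] [MeasurableSingletonClass SS]
    [Fintype SZ] [Nonempty SZ] [MeasurableSpace SZ] [MeasurableSingletonClass SZ]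
    [Fintype S1] [Nonempty S1] [MeasurableSpace S1] [MeasurableSingletonClass S1]
    [Fintype S2] [Nonempty S2] [MeasurableSpace S2] [MeasurableSingletonClass S2]
    [Fintype SU] [Nonempty SU] [MeasurableSpace SU] [MeasurableSingletonClass SU]
    [Fintype SV] [Nonempty SV] [MeasurableSpace SV] [MeasurableSingletonClass SV]
    (S : Ω → SS) (Z : Ω → SZ) (W₁ : Ω → S1) (W₂ : Ω → S2) (U : Ω → SU) (V : Ω → SV)
    (hS : Measurable S) (hZ : Measurable Z) (hW₁ : Measurable W₁) (hW₂ : Measurable W₂)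
    (hU : Measurable U) (hV : Measurable V)
    (t : ℝ) (ht : 0 ≤ t)
    (hdec : condEnt μ S (fun ω => (W₁ ω, W₂ ω, Z ω)) = 0)
    (hrate : ent μ S ≥ ent μ Z + 2 * t)
    (hWfun : condEnt μ (fun ω => (W₁ ω, W₂ ω)) (fun ω => (U ω, V ω)) = 0)
    (hUV : ent μ (fun ω => (U ω, V ω)) ≤ 2 * t) :
    ent μ (fun ω => (W₁ ω, W₂ ω)) = 2 * t ∧
      ent μ (fun ω => (U ω, V ω)) = 2 * t ∧
      condEnt μ (fun ω => (U ω, V ω)) (fun ω => (W₁ ω, W₂ ω)) = 0 := by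
  have hW : Measurable fun ω => (W₁ ω, W₂ ω) := hW₁.prodMk hW₂
  have hUVm : Measurable fun ω => (U ω, V ω) := hU.prodMk hV
  have hT : Measurable fun ω => (W₁ ω, W₂ ω, Z ω) := hW₁.prodMk (hW₂.prodMk hZ)
  have hdec' : ent μ (fun ω => (S ω, (W₁ ω, W₂ ω, Z ω)))
      - ent μ (fun ω => (W₁ ω, W₂ ω, Z ω)) = 0 := hdec
  have hWfun' : ent μ (fun ω => ((W₁ ω, W₂ ω), (U ω, V ω)))
      - ent μ (fun ω => (U ω, V ω)) = 0 := hWfun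
  -- Step 1 : H(S) ≤ H(W₁, W₂, Z)
  have h1 : ent μ S ≤ ent μ (fun ω => (W₁ ω, W₂ ω, Z ω)) := by
    have hle : ent μ S ≤ ent μ (fun ω => (S ω, (W₁ ω, W₂ ω, Z ω))) := ent_fst_le μ hS hT
    linarith
  -- Step 2 : H(W₁, W₂, Z) ≤ H(W₁, W₂) + H(Z)
  have h2 : ent μ (fun ω => (W₁ ω, W₂ ω, Z ω)) ≤ ent μ (fun ω => (W₁ ω, W₂ ω)) + ent μ Z := by
    have he : ent μ (fun ω => ((W₁ ω, W₂ ω), Z ω)) = ent μ (fun ω => (W₁ ω, W₂ ω, Z ω)) :=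
      ent_comp_inj μ hT (f := fun p => ((p.1, p.2.1), p.2.2)) (by
        intro a b h
        simp only [Prod.ext_iff] at h ⊢
        tauto)
    have hsub : ent μ (fun ω => ((W₁ ω, W₂ ω), Z ω))
        ≤ ent μ (fun ω => (W₁ ω, W₂ ω)) + ent μ Z := ent_pair_le_add μ hW hZ
    linarith
  have hWlow : 2 * t ≤ ent μ (fun ω => (W₁ ω, W₂ ω)) := by linarith
  -- Step 3 : H(W₁, W₂) ≤ H(U, V)
  have h3 : ent μ (fun ω => (W₁ ω, W₂ ω)) ≤ ent μ (fun ω => (U ω, V ω)) := by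
    have hle : ent μ (fun ω => (W₁ ω, W₂ ω))
        ≤ ent μ (fun ω => ((W₁ ω, W₂ ω), (U ω, V ω))) := ent_fst_le μ hW hUVm
    linarith
  have hWeq : ent μ (fun ω => (W₁ ω, W₂ ω)) = 2 * t := le_antisymm (h3.trans hUV) hWlow
  have hUVeq : ent μ (fun ω => (U ω, V ω)) = 2 * t := le_antisymm hUV (hWlow.trans h3)
  refine ⟨hWeq, hUVeq, ?_⟩
  have hswap : ent μ (fun ω => ((W₁ ω, W₂ ω), (U ω, V ω)))
      = ent μ (fun ω => ((U ω, V ω), (W₁ ω, W₂ ω))) :=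
    ent_comp_inj μ (hUVm.prodMk hW) (f := Prod.swap) Prod.swap_injective
  show ent μ (fun ω => ((U ω, V ω), (W₁ ω, W₂ ω))) - ent μ (fun ω => (W₁ ω, W₂ ω)) = 0
  linarith
end

section
/- Let X, W1, W3, W4, W5 be random variables on a probability space with values in finite nonempty sets. Suppose H(W1 | X) = 0, I(W3, W4 ; X | W1) = 0, H(W5 | X) = 0, H(W5 | W3, W4) = 0, and H(W5) ≥ H(W1). Then H(W1 | W3, W4) = 0 (W1 can be reconstructed from the pair (W3, W4)). -/
open MeasureTheory ProbabilityTheory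

namespace StmtAux

open Real Finset

variable {Ω : Type*} [MeasurableSpace Ω] (μ : Measure Ω) [IsProbabilityMeasure μ]

lemma meas_partition {β : Type*} [Fintype β] [MeasurableSpace β] [MeasurableSingletonClass β]
    {S : Set Ω} (hS : MeasurableSet S) {B : Ω → β} (hB : Measurable B) :
    (μ S).toReal = ∑ b : β, (μ (S ∩ B ⁻¹' {b})).toReal := by
  rw [← ENNReal.toReal_sum (fun a _ => measure_ne_top μ _)]
  congr 1
  rw [← measure_biUnion_finset ?_ (fun b _ => hS.inter (hB (measurableSet_singleton b)))]
  · congr 1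
    ext ω
    simp
  · intro x _ y _ hxy
    rw [Function.onFun, Set.disjoint_left]
    rintro ω ⟨-, hx⟩ ⟨-, hy⟩
    exact hxy (by simp_all)

lemma ent_eq {S : Type*} [Fintype S] [MeasurableSpace S] [MeasurableSingletonClass S]
    {Z : Ω → S} (hZ : Measurable Z) :
    ent μ Z = ∑ s : S, Real.negMulLog (μ (Z ⁻¹' {s})).toReal := by
  refine Finset.sum_congr rfl fun s _ => ?_
  rw [Measure.map_apply hZ (measurableSet_singleton s)]

lemma negMulLog_sum_le {ι : Type*} (s : Finset ι) (w : ι → ℝ) (hw : ∀ i ∈ s, 0 ≤ w i) :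
    Real.negMulLog (∑ i ∈ s, w i) ≤ ∑ i ∈ s, Real.negMulLog (w i) := by
  have hT : Real.negMulLog (∑ i ∈ s, w i)
      = ∑ i ∈ s, -(w i * Real.log (∑ j ∈ s, w j)) := by
    rw [Real.negMulLog, neg_mul, Finset.sum_mul]
    rw [Finset.sum_neg_distrib]
  rw [hT]
  refine Finset.sum_le_sum fun i hi => ?_
  rcases eq_or_lt_of_le (hw i hi) with h0 | hpos
  · simp [← h0]
  · rw [Real.negMulLog, neg_mul, neg_le_neg_iff]
    exact mul_le_mul_of_nonneg_left
      (Real.log_le_log hpos (Finset.single_le_sum hw hi)) (le_of_lt hpos)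

lemma pair_preimage {α β : Type*} (A : Ω → α) (B : Ω → β) (a : α) (b : β) :
    (fun ω => (A ω, B ω)) ⁻¹' {(a, b)} = A ⁻¹' {a} ∩ B ⁻¹' {b} := by
  ext ω; simp [Prod.ext_iff, and_comm]

lemma ent_pair_ge {α β : Type*}
    [Fintype α] [MeasurableSpace α] [MeasurableSingletonClass α]
    [Fintype β] [MeasurableSpace β] [MeasurableSingletonClass β]
    {A : Ω → α} {B : Ω → β} (hA : Measurable A) (hB : Measurable B) :
    ent μ B ≤ ent μ (fun ω => (A ω, B ω)) := by
  rw [ent_eq μ hB, ent_eq μ (hA.prodMk hB), Fintype.sum_prod_type, Finset.sum_comm]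
  refine Finset.sum_le_sum fun b _ => ?_
  have hm : (μ (B ⁻¹' {b})).toReal
      = ∑ a : α, (μ ((fun ω => (A ω, B ω)) ⁻¹' {(a, b)})).toReal := by
    rw [meas_partition μ (hB (measurableSet_singleton b)) hA]
    refine Finset.sum_congr rfl fun a _ => ?_
    rw [pair_preimage]
    rw [Set.inter_comm]
  rw [hm]
  exact negMulLog_sum_le _ _ fun a _ => ENNReal.toReal_nonneg

lemma ent_comp_inj {α β : Type*}
    [Fintype α] [MeasurableSpace α] [MeasurableSingletonClass α]
    [Fintype β] [MeasurableSpace β] [MeasurableSingletonClass β]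
    {Z : Ω → α} (hZ : Measurable Z) {f : α → β} (hf : Function.Injective f) :
    ent μ (fun ω => f (Z ω)) = ent μ Z := by
  classical
  rw [ent_eq μ (show Measurable (fun ω => f (Z ω)) from Measurable.of_discrete.comp hZ),
    ent_eq μ hZ]
  set g : β → ℝ := fun t => Real.negMulLog (μ ((fun ω => f (Z ω)) ⁻¹' {t})).toReal with hg
  have hempty : ∀ t ∈ Finset.univ, t ∉ Finset.univ.image f → g t = 0 := by
    intro t _ ht
    have : (fun ω => f (Z ω)) ⁻¹' {t} = ∅ := by
      ext ω
      simp only [Set.mem_preimage, Set.mem_singleton_iff, Set.mem_empty_iff_false, iff_false]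
      intro h
      exact ht (Finset.mem_image.mpr ⟨Z ω, Finset.mem_univ _, h⟩)
    simp [hg, this]
  calc ∑ t : β, g t = ∑ t ∈ Finset.univ.image f, g t :=
        (Finset.sum_subset (Finset.subset_univ _) hempty).symm
    _ = ∑ a : α, g (f a) := Finset.sum_image (fun a _ b _ h => hf h)
    _ = ∑ a : α, Real.negMulLog (μ (Z ⁻¹' {a})).toReal := by
        refine Finset.sum_congr rfl fun a _ => ?_
        have : (fun ω => f (Z ω)) ⁻¹' {f a} = Z ⁻¹' {a} := by
          ext ω; simp [hf.eq_iff]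
        simp only [hg, this]

lemma core {A B C : Type*} [Fintype A] [Fintype B] [Fintype C] (p : A → B → C → ℝ)
    (hp : ∀ a b c, 0 ≤ p a b c) :
    (∑ a, ∑ b, ∑ c, Real.negMulLog (p a b c)) + ∑ c, Real.negMulLog (∑ a, ∑ b, p a b c)
      ≤ (∑ b, ∑ c, Real.negMulLog (∑ a, p a b c))
        + ∑ a, ∑ c, Real.negMulLog (∑ b, p a b c) := by
  set pC : C → ℝ := fun c => ∑ a, ∑ b, p a b c with hpC
  set pAC : A → C → ℝ := fun a c => ∑ b, p a b c with hpAC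
  set pBC : B → C → ℝ := fun b c => ∑ a, p a b c with hpBC
  set F : A → B → C → ℝ := fun a b c =>
    p a b c * (Real.log (p a b c) + Real.log (pC c)
      - Real.log (pAC a c) - Real.log (pBC b c)) with hF
  set G : A → B → C → ℝ := fun a b c => pAC a c * pBC b c / pC c with hG
  -- nonnegativity of marginals
  have hpACnn : ∀ a c, 0 ≤ pAC a c := fun a c => Finset.sum_nonneg fun b _ => hp a b c
  have hpBCnn : ∀ b c, 0 ≤ pBC b c := fun b c => Finset.sum_nonneg fun a _ => hp a b c
  have hpCnn : ∀ c, 0 ≤ pC c := fun c =>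
    Finset.sum_nonneg fun a _ => Finset.sum_nonneg fun b _ => hp a b c
  -- Step A : termwise bound
  have stepA : ∀ a b c, p a b c - G a b c ≤ F a b c := by
    intro a b c
    by_cases h0 : p a b c = 0
    · have : 0 ≤ G a b c := div_nonneg (mul_nonneg (hpACnn a c) (hpBCnn b c)) (hpCnn c)
      simp only [hF, h0, zero_mul, zero_sub, neg_nonpos]
      linarith
    have hppos : 0 < p a b c := lt_of_le_of_ne (hp a b c) (Ne.symm h0)
    have hac : p a b c ≤ pAC a c := Finset.single_le_sum (fun b _ => hp a b c) (Finset.mem_univ b)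
    have hbc : p a b c ≤ pBC b c := Finset.single_le_sum (fun a _ => hp a b c) (Finset.mem_univ a)
    have hcc : pAC a c ≤ pC c :=
      Finset.single_le_sum (fun a _ => hpACnn a c) (Finset.mem_univ a)
    have hACpos : 0 < pAC a c := lt_of_lt_of_le hppos hac
    have hBCpos : 0 < pBC b c := lt_of_lt_of_le hppos hbc
    have hCpos : 0 < pC c := lt_of_lt_of_le hACpos hcc
    have hxpos : 0 < pAC a c * pBC b c / (p a b c * pC c) := by positivity
    have hlog := Real.log_le_sub_one_of_pos hxpos
    have hlogeq : Real.log (pAC a c * pBC b c / (p a b c * pC c))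
        = Real.log (pAC a c) + Real.log (pBC b c) - Real.log (p a b c) - Real.log (pC c) := by
      rw [Real.log_div (by positivity) (by positivity), Real.log_mul hACpos.ne' hBCpos.ne',
        Real.log_mul hppos.ne' hCpos.ne']
      ring
    have hmul := mul_le_mul_of_nonneg_left hlog hppos.le
    have hpx : p a b c * (pAC a c * pBC b c / (p a b c * pC c)) = G a b c := by
      rw [hG]
      field_simp
    rw [hlogeq] at hmul
    have hFeq : F a b c = p a b c * (Real.log (p a b c) + Real.log (pC c)
        - Real.log (pAC a c) - Real.log (pBC b c)) := rfl
    have h2 : p a b c * (pAC a c * pBC b c / (p a b c * pC c) - 1)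
        = G a b c - p a b c := by rw [mul_sub, hpx]; ring
    have h3 : p a b c * (Real.log (p a b c) + Real.log (pC c)
          - Real.log (pAC a c) - Real.log (pBC b c))
        = -(p a b c * (Real.log (pAC a c) + Real.log (pBC b c)
          - Real.log (p a b c) - Real.log (pC c))) := by ring
    rw [hFeq, h3]
    linarith [hmul, h2]
  -- Step B : the G marginal sums to pC
  have stepB : ∀ c, (∑ a, ∑ b, G a b c) = pC c := by
    intro c
    by_cases h0 : pC c = 0
    · have hz : ∀ a b, G a b c = 0 := by
        intro a b; rw [hG]; simp [h0]
      simp [hz, h0]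
    · have : (∑ a, ∑ b, G a b c) = (∑ a, pAC a c) * (∑ b, pBC b c) / pC c := by
        rw [Finset.sum_mul, Finset.sum_div]
        refine Finset.sum_congr rfl fun a _ => ?_
        rw [Finset.mul_sum, Finset.sum_div]
      rw [this]
      have h1 : (∑ a, pAC a c) = pC c := rfl
      have h2 : (∑ b, pBC b c) = pC c := by
        rw [hpBC, hpC]; exact Finset.sum_comm
      rw [h1, h2, mul_div_assoc, div_self h0, mul_one]
  -- Step C : sum of F is nonnegative
  have sum_p : (∑ a, ∑ b, ∑ c, p a b c) = ∑ c, pC c := by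
    calc (∑ a, ∑ b, ∑ c, p a b c) = ∑ a, ∑ c, ∑ b, p a b c :=
          Finset.sum_congr rfl fun a _ => Finset.sum_comm
      _ = ∑ c, ∑ a, ∑ b, p a b c := Finset.sum_comm
      _ = ∑ c, pC c := rfl
  have sum_G : (∑ a, ∑ b, ∑ c, G a b c) = ∑ c, pC c := by
    calc (∑ a, ∑ b, ∑ c, G a b c) = ∑ a, ∑ c, ∑ b, G a b c :=
          Finset.sum_congr rfl fun a _ => Finset.sum_comm
      _ = ∑ c, ∑ a, ∑ b, G a b c := Finset.sum_comm
      _ = ∑ c, pC c := Finset.sum_congr rfl fun c _ => stepB c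
  have stepC : 0 ≤ ∑ a, ∑ b, ∑ c, F a b c := by
    have : (∑ a, ∑ b, ∑ c, (p a b c - G a b c)) ≤ ∑ a, ∑ b, ∑ c, F a b c := by
      refine Finset.sum_le_sum fun a _ => Finset.sum_le_sum fun b _ =>
        Finset.sum_le_sum fun c _ => stepA a b c
    have hz : (∑ a, ∑ b, ∑ c, (p a b c - G a b c)) = 0 := by
      simp only [Finset.sum_sub_distrib]
      rw [sum_p, sum_G]
      ring
    linarith
  -- Step D : expansion
  have eC : (∑ c, Real.negMulLog (pC c)) = ∑ a, ∑ b, ∑ c, (-(p a b c * Real.log (pC c))) := by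
    have per : ∀ c, Real.negMulLog (pC c) = ∑ a, ∑ b, (-(p a b c * Real.log (pC c))) := by
      intro c
      rw [Real.negMulLog, neg_mul, hpC]
      simp only [Finset.sum_mul, Finset.sum_neg_distrib]
    calc (∑ c, Real.negMulLog (pC c))
        = ∑ c, ∑ a, ∑ b, (-(p a b c * Real.log (pC c))) :=
          Finset.sum_congr rfl fun c _ => per c
      _ = ∑ a, ∑ c, ∑ b, (-(p a b c * Real.log (pC c))) := Finset.sum_comm
      _ = ∑ a, ∑ b, ∑ c, (-(p a b c * Real.log (pC c))) :=
          Finset.sum_congr rfl fun a _ => Finset.sum_comm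
  have eAC : (∑ a, ∑ c, Real.negMulLog (pAC a c))
      = ∑ a, ∑ b, ∑ c, (-(p a b c * Real.log (pAC a c))) := by
    refine Finset.sum_congr rfl fun a _ => ?_
    have per : ∀ c, Real.negMulLog (pAC a c) = ∑ b, (-(p a b c * Real.log (pAC a c))) := by
      intro c
      rw [Real.negMulLog, neg_mul, hpAC]
      simp only [Finset.sum_mul, Finset.sum_neg_distrib]
    rw [Finset.sum_congr rfl fun c _ => per c]
    exact Finset.sum_comm
  have eBC : (∑ b, ∑ c, Real.negMulLog (pBC b c))
      = ∑ a, ∑ b, ∑ c, (-(p a b c * Real.log (pBC b c))) := by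
    have per : ∀ b c, Real.negMulLog (pBC b c) = ∑ a, (-(p a b c * Real.log (pBC b c))) := by
      intro b c
      rw [Real.negMulLog, neg_mul, hpBC]
      simp only [Finset.sum_mul, Finset.sum_neg_distrib]
    calc (∑ b, ∑ c, Real.negMulLog (pBC b c))
        = ∑ b, ∑ c, ∑ a, (-(p a b c * Real.log (pBC b c))) :=
          Finset.sum_congr rfl fun b _ => Finset.sum_congr rfl fun c _ => per b c
      _ = ∑ b, ∑ a, ∑ c, (-(p a b c * Real.log (pBC b c))) :=
          Finset.sum_congr rfl fun b _ => Finset.sum_comm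
      _ = ∑ a, ∑ b, ∑ c, (-(p a b c * Real.log (pBC b c))) := Finset.sum_comm
  have eP : (∑ a, ∑ b, ∑ c, Real.negMulLog (p a b c))
      = ∑ a, ∑ b, ∑ c, (-(p a b c * Real.log (p a b c))) := by
    refine Finset.sum_congr rfl fun a _ => Finset.sum_congr rfl fun b _ =>
      Finset.sum_congr rfl fun c _ => ?_
    rw [Real.negMulLog, neg_mul]
  have expand : (∑ b, ∑ c, Real.negMulLog (pBC b c)) + (∑ a, ∑ c, Real.negMulLog (pAC a c))
      - (∑ a, ∑ b, ∑ c, Real.negMulLog (p a b c)) - (∑ c, Real.negMulLog (pC c))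
      = ∑ a, ∑ b, ∑ c, F a b c := by
    rw [eC, eAC, eBC, eP]
    simp only [← Finset.sum_add_distrib, ← Finset.sum_sub_distrib]
    refine Finset.sum_congr rfl fun a _ => Finset.sum_congr rfl fun b _ =>
      Finset.sum_congr rfl fun c _ => ?_
    rw [hF]
    ring
  linarith

lemma ent_submod {α β γ : Type*}
    [Fintype α] [MeasurableSpace α] [MeasurableSingletonClass α]
    [Fintype β] [MeasurableSpace β] [MeasurableSingletonClass β]
    [Fintype γ] [MeasurableSpace γ] [MeasurableSingletonClass γ]
    {A : Ω → α} {B : Ω → β} {C : Ω → γ}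
    (hA : Measurable A) (hB : Measurable B) (hC : Measurable C) :
    ent μ (fun ω => (A ω, (B ω, C ω))) + ent μ C
      ≤ ent μ (fun ω => (B ω, C ω)) + ent μ (fun ω => (A ω, C ω)) := by
  set p : α → β → γ → ℝ :=
    fun a b c => (μ (A ⁻¹' {a} ∩ B ⁻¹' {b} ∩ C ⁻¹' {c})).toReal with hp
  have hpnn : ∀ a b c, 0 ≤ p a b c := fun _ _ _ => ENNReal.toReal_nonneg
  have b1 : ent μ (fun ω => (A ω, (B ω, C ω)))
      = ∑ a, ∑ b, ∑ c, Real.negMulLog (p a b c) := by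
    rw [ent_eq μ (hA.prodMk (hB.prodMk hC)), Fintype.sum_prod_type]
    refine Finset.sum_congr rfl fun a _ => ?_
    rw [Fintype.sum_prod_type]
    refine Finset.sum_congr rfl fun b _ => Finset.sum_congr rfl fun c _ => ?_
    have hset : (fun ω => (A ω, (B ω, C ω))) ⁻¹' {(a, (b, c))}
        = A ⁻¹' {a} ∩ B ⁻¹' {b} ∩ C ⁻¹' {c} := by
      ext ω
      simp only [Set.mem_preimage, Set.mem_singleton_iff, Prod.ext_iff,
        Set.mem_inter_iff]
      tauto
    rw [hset]
  have b2 : ent μ C = ∑ c, Real.negMulLog (∑ a, ∑ b, p a b c) := by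
    rw [ent_eq μ hC]
    refine Finset.sum_congr rfl fun c _ => ?_
    rw [meas_partition μ (hC (measurableSet_singleton c)) hA]
    congr 1
    refine Finset.sum_congr rfl fun a _ => ?_
    rw [meas_partition μ ((hC (measurableSet_singleton c)).inter
      (hA (measurableSet_singleton a))) hB]
    refine Finset.sum_congr rfl fun b _ => ?_
    have hset : (C ⁻¹' {c} ∩ A ⁻¹' {a}) ∩ B ⁻¹' {b}
        = A ⁻¹' {a} ∩ B ⁻¹' {b} ∩ C ⁻¹' {c} := by
      ext ω
      simp only [Set.mem_inter_iff, Set.mem_preimage, Set.mem_singleton_iff]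
      tauto
    rw [hset]
  have b3 : ent μ (fun ω => (B ω, C ω))
      = ∑ b, ∑ c, Real.negMulLog (∑ a, p a b c) := by
    rw [ent_eq μ (hB.prodMk hC), Fintype.sum_prod_type]
    refine Finset.sum_congr rfl fun b _ => Finset.sum_congr rfl fun c _ => ?_
    rw [pair_preimage, meas_partition μ ((hB (measurableSet_singleton b)).inter
      (hC (measurableSet_singleton c))) hA]
    congr 1
    refine Finset.sum_congr rfl fun a _ => ?_
    have hset : (B ⁻¹' {b} ∩ C ⁻¹' {c}) ∩ A ⁻¹' {a}
        = A ⁻¹' {a} ∩ B ⁻¹' {b} ∩ C ⁻¹' {c} := by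
      ext ω
      simp only [Set.mem_inter_iff, Set.mem_preimage, Set.mem_singleton_iff]
      tauto
    rw [hset]
  have b4 : ent μ (fun ω => (A ω, C ω))
      = ∑ a, ∑ c, Real.negMulLog (∑ b, p a b c) := by
    rw [ent_eq μ (hA.prodMk hC), Fintype.sum_prod_type]
    refine Finset.sum_congr rfl fun a _ => Finset.sum_congr rfl fun c _ => ?_
    rw [pair_preimage, meas_partition μ ((hA (measurableSet_singleton a)).inter
      (hC (measurableSet_singleton c))) hB]
    congr 1
    refine Finset.sum_congr rfl fun b _ => ?_
    have hset : (A ⁻¹' {a} ∩ C ⁻¹' {c}) ∩ B ⁻¹' {b}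
        = A ⁻¹' {a} ∩ B ⁻¹' {b} ∩ C ⁻¹' {c} := by
      ext ω
      simp only [Set.mem_inter_iff, Set.mem_preimage, Set.mem_singleton_iff]
      tauto
    rw [hset]
  rw [b1, b2, b3, b4]
  exact core p hpnn

lemma ent_swap {α β : Type*}
    [Fintype α] [MeasurableSpace α] [MeasurableSingletonClass α]
    [Fintype β] [MeasurableSpace β] [MeasurableSingletonClass β]
    {A : Ω → α} {B : Ω → β} (hA : Measurable A) (hB : Measurable B) :
    ent μ (fun ω => (A ω, B ω)) = ent μ (fun ω => (B ω, A ω)) :=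
  (ent_comp_inj μ (hA.prodMk hB) (f := Prod.swap) Prod.swap_injective).symm

end StmtAux


theorem stmt_7
    {Ω : Type*} [MeasurableSpace Ω] (μ : Measure Ω) [IsProbabilityMeasure μ]
    {SX S1 S3 S4 S5 : Type*}
    [Fintype SX] [Nonempty SX] [MeasurableSpace SX] [MeasurableSingletonClass SX]
    [Fintype S1] [Nonempty S1] [MeasurableSpace S1] [MeasurableSingletonClass S1]
    [Fintype S3] [Nonempty S3] [MeasurableSpace S3] [MeasurableSingletonClass S3]
    [Fintype S4] [Nonempty S4] [MeasurableSpace S4] [MeasurableSingletonClass S4]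
    [Fintype S5] [Nonempty S5] [MeasurableSpace S5] [MeasurableSingletonClass S5]
    (X : Ω → SX) (W₁ : Ω → S1) (W₃ : Ω → S3) (W₄ : Ω → S4) (W₅ : Ω → S5)
    (hX : Measurable X) (hW₁ : Measurable W₁) (hW₃ : Measurable W₃)
    (hW₄ : Measurable W₄) (hW₅ : Measurable W₅)
    (h1 : condEnt μ W₁ X = 0)
    (hmarkov : condMutInfo μ (fun ω => (W₃ ω, W₄ ω)) X W₁ = 0)
    (h5X : condEnt μ W₅ X = 0)
    (h5dec : condEnt μ W₅ (fun ω => (W₃ ω, W₄ ω)) = 0)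
    (hent : ent μ W₅ ≥ ent μ W₁) :
    condEnt μ W₁ (fun ω => (W₃ ω, W₄ ω)) = 0 := by
  classical
  have hW34 : Measurable (fun ω => (W₃ ω, W₄ ω)) := hW₃.prodMk hW₄
  simp only [condEnt, condMutInfo] at h1 hmarkov h5X h5dec ⊢
  -- swaps
  have sw1X : ent μ (fun ω => (X ω, W₁ ω)) = ent μ (fun ω => (W₁ ω, X ω)) :=
    StmtAux.ent_swap μ hX hW₁
  have sw3 : ent μ (fun ω => (((W₃ ω, W₄ ω), X ω), W₁ ω))
      = ent μ (fun ω => (W₁ ω, ((W₃ ω, W₄ ω), X ω))) :=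
    StmtAux.ent_swap μ (hW34.prodMk hX) hW₁
  have sw4 : ent μ (fun ω => ((W₃ ω, W₄ ω), W₁ ω))
      = ent μ (fun ω => (W₁ ω, (W₃ ω, W₄ ω))) := StmtAux.ent_swap μ hW34 hW₁
  have sw5 : ent μ (fun ω => ((W₃ ω, W₄ ω), W₅ ω))
      = ent μ (fun ω => (W₅ ω, (W₃ ω, W₄ ω))) := StmtAux.ent_swap μ hW34 hW₅
  have sw6 : ent μ (fun ω => (X ω, W₅ ω)) = ent μ (fun ω => (W₅ ω, X ω)) :=
    StmtAux.ent_swap μ hX hW₅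
  have sw7 : ent μ (fun ω => ((W₃ ω, W₄ ω), X ω))
      = ent μ (fun ω => (X ω, (W₃ ω, W₄ ω))) := StmtAux.ent_swap μ hW34 hX
  -- submodularity instances
  have sub1 : ent μ (fun ω => (W₁ ω, ((W₃ ω, W₄ ω), X ω))) + ent μ X
      ≤ ent μ (fun ω => ((W₃ ω, W₄ ω), X ω)) + ent μ (fun ω => (W₁ ω, X ω)) :=
    StmtAux.ent_submod μ hW₁ hW34 hX
  have sub2 : ent μ (fun ω => (X ω, ((W₃ ω, W₄ ω), W₅ ω))) + ent μ W₅
      ≤ ent μ (fun ω => ((W₃ ω, W₄ ω), W₅ ω)) + ent μ (fun ω => (X ω, W₅ ω)) :=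
    StmtAux.ent_submod μ hX hW34 hW₅
  -- monotonicity instances
  have mono1 : ent μ (fun ω => ((W₃ ω, W₄ ω), X ω))
      ≤ ent μ (fun ω => (W₁ ω, ((W₃ ω, W₄ ω), X ω))) :=
    StmtAux.ent_pair_ge μ hW₁ (hW34.prodMk hX)
  have mono2 : ent μ (fun ω => (X ω, (W₃ ω, W₄ ω)))
      ≤ ent μ (fun ω => (W₅ ω, (X ω, (W₃ ω, W₄ ω)))) :=
    StmtAux.ent_pair_ge μ hW₅ (hX.prodMk hW34)
  have mono3 : ent μ (fun ω => (W₃ ω, W₄ ω))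
      ≤ ent μ (fun ω => (W₁ ω, (W₃ ω, W₄ ω))) := StmtAux.ent_pair_ge μ hW₁ hW34
  -- rearrangement
  have rearr : ent μ (fun ω => (X ω, ((W₃ ω, W₄ ω), W₅ ω)))
      = ent μ (fun ω => (W₅ ω, (X ω, (W₃ ω, W₄ ω)))) := by
    have hinj : Function.Injective
        (fun q : S5 × (SX × (S3 × S4)) => (q.2.1, (q.2.2, q.1))) := by
      rintro ⟨v, x, m⟩ ⟨v', x', m'⟩ h
      simp only [Prod.mk.injEq] at h ⊢
      obtain ⟨ha, hb, hc⟩ := h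
      exact ⟨hc, ha, hb⟩
    have h := StmtAux.ent_comp_inj μ (hW₅.prodMk (hX.prodMk hW34)) hinj
    simpa using h
  linarith
end

section
/- Let K, W1, W3 be random variables on a probability space with values in finite nonempty sets. If H(W1 | K, W3) = 0, I(W1 ; W3) = 0, and H(K) ≤ H(W1), then H(K | W1, W3) = 0 (K is a function of the pair (W1, W3)). -/
open MeasureTheory ProbabilityTheory

/- ### Auxiliary lemmas -/

lemma aux_negMulLog_sum_le {ι : Type*} (u : Finset ι) (f : ι → ℝ) (hf : ∀ i ∈ u, 0 ≤ f i) :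
    Real.negMulLog (∑ i ∈ u, f i) ≤ ∑ i ∈ u, Real.negMulLog (f i) := by
  have hS : ∀ i ∈ u, f i ≤ ∑ j ∈ u, f j := fun i hi => Finset.single_le_sum hf hi
  rw [Real.negMulLog, neg_mul, ← neg_neg (∑ i ∈ u, Real.negMulLog (f i))]
  rw [neg_le_neg_iff, ← Finset.sum_neg_distrib, Finset.sum_mul]
  apply Finset.sum_le_sum
  intro i hi
  rcases eq_or_lt_of_le (hf i hi) with h0 | h0
  · simp [Real.negMulLog, ← h0]
  · have : Real.log (f i) ≤ Real.log (∑ j ∈ u, f j) := Real.log_le_log h0 (hS i hi)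
    simp only [Real.negMulLog, neg_mul, neg_neg]
    nlinarith

lemma aux_gibbs {S T : Type*} [Fintype S] [Fintype T] (p : S × T → ℝ)
    (hp : ∀ z, 0 ≤ p z) (hsum : ∑ z, p z = 1) :
    ∑ z, Real.negMulLog (p z) ≤
      (∑ s, Real.negMulLog (∑ t, p (s, t))) + ∑ t, Real.negMulLog (∑ s, p (s, t)) := by
  set ps : S → ℝ := fun s => ∑ t, p (s, t) with hps_def
  set qt : T → ℝ := fun t => ∑ s, p (s, t) with hqt_def
  have hps : ∀ s, 0 ≤ ps s := fun s => Finset.sum_nonneg fun t _ => hp _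
  have hqt : ∀ t, 0 ≤ qt t := fun t => Finset.sum_nonneg fun s _ => hp _
  have hps1 : ∑ s, ps s = 1 := by rw [← hsum, ← Fintype.sum_prod_type]
  have hqt1 : ∑ t, qt t = 1 := by rw [← hsum, ← Fintype.sum_prod_type_right]
  have hple : ∀ z : S × T, p z ≤ ps z.1 :=
    fun z => Finset.single_le_sum (fun t _ => hp (z.1, t)) (Finset.mem_univ z.2)
  have hqle : ∀ z : S × T, p z ≤ qt z.2 :=
    fun z => Finset.single_le_sum (fun s _ => hp (s, z.2)) (Finset.mem_univ z.1)
  -- rewrite the two marginal entropies as sums over pairs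
  have h1 : ∑ s, Real.negMulLog (ps s) = ∑ z : S × T, (-(p z) * Real.log (ps z.1)) := by
    rw [Fintype.sum_prod_type]
    apply Finset.sum_congr rfl
    intro s _
    show Real.negMulLog (ps s) = ∑ t, -p (s, t) * Real.log (ps s)
    rw [show ps s = ∑ t, p (s, t) from rfl, Real.negMulLog, ← Finset.sum_neg_distrib,
      Finset.sum_mul]
  have h2 : ∑ t, Real.negMulLog (qt t) = ∑ z : S × T, (-(p z) * Real.log (qt z.2)) := by
    rw [Fintype.sum_prod_type_right]
    apply Finset.sum_congr rfl
    intro t _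
    show Real.negMulLog (qt t) = ∑ s, -p (s, t) * Real.log (qt t)
    rw [show qt t = ∑ s, p (s, t) from rfl, Real.negMulLog, ← Finset.sum_neg_distrib,
      Finset.sum_mul]
  rw [h1, h2, ← Finset.sum_add_distrib]
  -- key per-term estimate with correction term
  have key : ∀ z : S × T, Real.negMulLog (p z) ≤
      (-(p z) * Real.log (ps z.1) + -(p z) * Real.log (qt z.2)) + (ps z.1 * qt z.2 - p z) := by
    intro z
    rcases eq_or_lt_of_le (hp z) with h0 | h0
    · rw [← h0]
      simp only [Real.negMulLog_zero, neg_zero, zero_mul, zero_add, add_zero, sub_zero]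
      nlinarith [hps z.1, hqt z.2]
    · have hpsz : 0 < ps z.1 := lt_of_lt_of_le h0 (hple z)
      have hqtz : 0 < qt z.2 := lt_of_lt_of_le h0 (hqle z)
      have hx : 0 < ps z.1 * qt z.2 / p z := by positivity
      have hlog := Real.log_le_sub_one_of_pos hx
      rw [Real.log_div (by positivity) (ne_of_gt h0), Real.log_mul (ne_of_gt hpsz) (ne_of_gt hqtz)]
        at hlog
      have hmul := mul_le_mul_of_nonneg_left hlog (le_of_lt h0)
      have hcancel : p z * (ps z.1 * qt z.2 / p z) = ps z.1 * qt z.2 := by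
        field_simp
      simp only [Real.negMulLog, neg_mul]
      nlinarith [hmul, hcancel]
  calc ∑ z, Real.negMulLog (p z)
      ≤ ∑ z : S × T, ((-(p z) * Real.log (ps z.1) + -(p z) * Real.log (qt z.2))
          + (ps z.1 * qt z.2 - p z)) := Finset.sum_le_sum fun z _ => key z
    _ = (∑ z : S × T, (-(p z) * Real.log (ps z.1) + -(p z) * Real.log (qt z.2)))
          + ((∑ z : S × T, ps z.1 * qt z.2) - ∑ z, p z) := by
        rw [Finset.sum_add_distrib, Finset.sum_sub_distrib]
    _ = ∑ z : S × T, (-(p z) * Real.log (ps z.1) + -(p z) * Real.log (qt z.2)) := by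
        have : ∑ z : S × T, ps z.1 * qt z.2 = (∑ s, ps s) * (∑ t, qt t) := by
          rw [Finset.sum_mul_sum, Fintype.sum_prod_type]
        rw [this, hps1, hqt1, hsum]
        ring

lemma aux_map_sum_one {Ω : Type*} [MeasurableSpace Ω] (μ : Measure Ω)
    [IsProbabilityMeasure μ] {S : Type*} [Fintype S] [MeasurableSpace S]
    [MeasurableSingletonClass S] (X : Ω → S) (hX : Measurable X) :
    ∑ s : S, ((μ.map X) {s}).toReal = 1 := by
  have h : ∀ s : S, (μ.map X) {s} = μ (X ⁻¹' {s}) := fun s =>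
    Measure.map_apply hX (measurableSet_singleton s)
  have hd : ((Finset.univ : Finset S) : Set S).PairwiseDisjoint (fun s => X ⁻¹' {s}) := by
    intro a _ b _ hab
    exact Set.disjoint_left.2 fun ω ha hb => hab (by
      simp only [Set.mem_preimage, Set.mem_singleton_iff] at ha hb; rw [← ha, ← hb])
  have hsum : ∑ s : S, μ (X ⁻¹' {s}) = μ Set.univ := by
    rw [← measure_biUnion_finset hd (fun s _ => hX (measurableSet_singleton s))]
    congr 1
    ext ω; simp
  have : ∑ s : S, ((μ.map X) {s}).toReal = (∑ s : S, μ (X ⁻¹' {s})).toReal := by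
    rw [ENNReal.toReal_sum (fun s _ => measure_ne_top μ _)]
    exact Finset.sum_congr rfl fun s _ => by rw [h s]
  rw [this, hsum, measure_univ, ENNReal.toReal_one]

lemma aux_marg_fst {Ω : Type*} [MeasurableSpace Ω] (μ : Measure Ω) [IsProbabilityMeasure μ]
    {S T : Type*} [Fintype S] [MeasurableSpace S] [MeasurableSingletonClass S]
    [Fintype T] [MeasurableSpace T] [MeasurableSingletonClass T]
    (X : Ω → S) (Y : Ω → T) (hX : Measurable X) (hY : Measurable Y) (s : S) :
    ((μ.map X) {s}).toReal = ∑ t : T, ((μ.map (fun ω => (X ω, Y ω))) {(s, t)}).toReal := by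
  have hXY : Measurable (fun ω => (X ω, Y ω)) := hX.prodMk hY
  have h : ∀ t : T, (μ.map (fun ω => (X ω, Y ω))) {(s, t)}
      = μ ((fun ω => (X ω, Y ω)) ⁻¹' {(s, t)}) := fun t =>
    Measure.map_apply hXY (measurableSet_singleton _)
  have hd : ((Finset.univ : Finset T) : Set T).PairwiseDisjoint
      (fun t => (fun ω => (X ω, Y ω)) ⁻¹' {(s, t)}) := by
    intro a _ b _ hab
    exact Set.disjoint_left.2 fun ω ha hb => hab (by
      simp only [Set.mem_preimage, Set.mem_singleton_iff, Prod.mk.injEq] at ha hb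
      rw [← ha.2, ← hb.2])
  have hsum : ∑ t : T, μ ((fun ω => (X ω, Y ω)) ⁻¹' {(s, t)}) = μ (X ⁻¹' {s}) := by
    rw [← measure_biUnion_finset hd (fun t _ => hXY (measurableSet_singleton _))]
    congr 1
    ext ω; simp
  rw [Measure.map_apply hX (measurableSet_singleton s), ← hsum,
    ENNReal.toReal_sum (fun t _ => measure_ne_top μ _)]
  exact Finset.sum_congr rfl fun t _ => by rw [h t]

lemma aux_marg_snd {Ω : Type*} [MeasurableSpace Ω] (μ : Measure Ω) [IsProbabilityMeasure μ]
    {S T : Type*} [Fintype S] [MeasurableSpace S] [MeasurableSingletonClass S]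
    [Fintype T] [MeasurableSpace T] [MeasurableSingletonClass T]
    (X : Ω → S) (Y : Ω → T) (hX : Measurable X) (hY : Measurable Y) (t : T) :
    ((μ.map Y) {t}).toReal = ∑ s : S, ((μ.map (fun ω => (X ω, Y ω))) {(s, t)}).toReal := by
  have hXY : Measurable (fun ω => (X ω, Y ω)) := hX.prodMk hY
  have h : ∀ s : S, (μ.map (fun ω => (X ω, Y ω))) {(s, t)}
      = μ ((fun ω => (X ω, Y ω)) ⁻¹' {(s, t)}) := fun s =>
    Measure.map_apply hXY (measurableSet_singleton _)
  have hd : ((Finset.univ : Finset S) : Set S).PairwiseDisjoint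
      (fun s => (fun ω => (X ω, Y ω)) ⁻¹' {(s, t)}) := by
    intro a _ b _ hab
    exact Set.disjoint_left.2 fun ω ha hb => hab (by
      simp only [Set.mem_preimage, Set.mem_singleton_iff, Prod.mk.injEq] at ha hb
      rw [← ha.1, ← hb.1])
  have hsum : ∑ s : S, μ ((fun ω => (X ω, Y ω)) ⁻¹' {(s, t)}) = μ (Y ⁻¹' {t}) := by
    rw [← measure_biUnion_finset hd (fun s _ => hXY (measurableSet_singleton _))]
    congr 1
    ext ω; simp
  rw [Measure.map_apply hY (measurableSet_singleton t), ← hsum,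
    ENNReal.toReal_sum (fun s _ => measure_ne_top μ _)]
  exact Finset.sum_congr rfl fun s _ => by rw [h s]

lemma aux_ent_comp_equiv {Ω : Type*} [MeasurableSpace Ω] (μ : Measure Ω)
    {S T : Type*} [Fintype S] [MeasurableSpace S] [MeasurableSingletonClass S]
    [Fintype T] [MeasurableSpace T] [MeasurableSingletonClass T]
    (e : S ≃ T) (X : Ω → S) (hX : Measurable X) :
    ent μ (fun ω => e (X ω)) = ent μ X := by
  unfold ent
  rw [← Equiv.sum_comp e (fun t => Real.negMulLog ((μ.map (fun ω => e (X ω))) {t}).toReal)]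
  apply Finset.sum_congr rfl
  intro s _
  congr 2
  have hm : Measurable (fun ω => e (X ω)) := (measurable_of_countable (e : S → T)).comp hX
  rw [Measure.map_apply hm (measurableSet_singleton _),
    Measure.map_apply hX (measurableSet_singleton _)]
  congr 1
  ext ω
  simp

lemma aux_ent_snd_le {Ω : Type*} [MeasurableSpace Ω] (μ : Measure Ω) [IsProbabilityMeasure μ]
    {S T : Type*} [Fintype S] [MeasurableSpace S] [MeasurableSingletonClass S]
    [Fintype T] [MeasurableSpace T] [MeasurableSingletonClass T]
    (X : Ω → S) (Y : Ω → T) (hX : Measurable X) (hY : Measurable Y) :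
    ent μ Y ≤ ent μ (fun ω => (X ω, Y ω)) := by
  unfold ent
  rw [Fintype.sum_prod_type_right]
  apply Finset.sum_le_sum
  intro t _
  rw [aux_marg_snd μ X Y hX hY t]
  exact aux_negMulLog_sum_le _ _ (fun s _ => ENNReal.toReal_nonneg)

lemma aux_ent_pair_le {Ω : Type*} [MeasurableSpace Ω] (μ : Measure Ω) [IsProbabilityMeasure μ]
    {S T : Type*} [Fintype S] [MeasurableSpace S] [MeasurableSingletonClass S]
    [Fintype T] [MeasurableSpace T] [MeasurableSingletonClass T]
    (X : Ω → S) (Y : Ω → T) (hX : Measurable X) (hY : Measurable Y) :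
    ent μ (fun ω => (X ω, Y ω)) ≤ ent μ X + ent μ Y := by
  unfold ent
  have hXY : Measurable (fun ω => (X ω, Y ω)) := hX.prodMk hY
  have hle := aux_gibbs (fun z : S × T => ((μ.map (fun ω => (X ω, Y ω))) {z}).toReal)
    (fun z => ENNReal.toReal_nonneg) (aux_map_sum_one μ _ hXY)
  refine le_trans hle ?_
  apply le_of_eq
  congr 1
  · exact Finset.sum_congr rfl fun s _ => by rw [← aux_marg_fst μ X Y hX hY s]
  · exact Finset.sum_congr rfl fun t _ => by rw [← aux_marg_snd μ X Y hX hY t]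

/-- Reordering equivalence. -/
def aux_e3 {A B C : Type*} : A × B × C ≃ B × A × C where
  toFun z := (z.2.1, z.1, z.2.2)
  invFun z := (z.2.1, z.1, z.2.2)
  left_inv _ := rfl
  right_inv _ := rfl

theorem stmt_9
    {Ω : Type*} [MeasurableSpace Ω] (μ : Measure Ω) [IsProbabilityMeasure μ]
    {SK S1 S3 : Type*}
    [Fintype SK] [Nonempty SK] [MeasurableSpace SK] [MeasurableSingletonClass SK]
    [Fintype S1] [Nonempty S1] [MeasurableSpace S1] [MeasurableSingletonClass S1]
    [Fintype S3] [Nonempty S3] [MeasurableSpace S3] [MeasurableSingletonClass S3]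
    (K : Ω → SK) (W₁ : Ω → S1) (W₃ : Ω → S3)
    (hK : Measurable K) (hW₁ : Measurable W₁) (hW₃ : Measurable W₃)
    (hfun : condEnt μ W₁ (fun ω => (K ω, W₃ ω)) = 0)
    (hind : mutInfo μ W₁ W₃ = 0)
    (hKle : ent μ K ≤ ent μ W₁) :
    condEnt μ K (fun ω => (W₁ ω, W₃ ω)) = 0 := by
  simp only [condEnt] at hfun ⊢
  simp only [mutInfo] at hind
  have hKW3 : Measurable (fun ω => (K ω, W₃ ω)) := hK.prodMk hW₃
  have hW13 : Measurable (fun ω => (W₁ ω, W₃ ω)) := hW₁.prodMk hW₃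
  -- reorder the triple
  have h1 : ent μ (fun ω => (K ω, (W₁ ω, W₃ ω)))
      = ent μ (fun ω => (W₁ ω, (K ω, W₃ ω))) :=
    aux_ent_comp_equiv μ aux_e3 (fun ω => (W₁ ω, (K ω, W₃ ω))) (hW₁.prodMk hKW3)
  -- subadditivity for (K, W₃)
  have h2 : ent μ (fun ω => (K ω, W₃ ω)) ≤ ent μ K + ent μ W₃ :=
    aux_ent_pair_le μ K W₃ hK hW₃
  -- lower bound: conditional entropy nonneg
  have h3 : ent μ (fun ω => (W₁ ω, W₃ ω)) ≤ ent μ (fun ω => (K ω, (W₁ ω, W₃ ω))) :=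
    aux_ent_snd_le μ K (fun ω => (W₁ ω, W₃ ω)) hK hW13
  linarith
end

section
/- Let K, W1, W3, W4 be random variables on a probability space with values in finite nonempty sets. Suppose I(W1 ; W3) = 0, H(W1 | K, W3) = 0, H(W1 | W3, W4) = 0, I(W1 ; K, W4) = 0, H(K) ≤ H(W1), H(W4) ≤ H(W1), and H(W3) ≤ H(W1). Then H(K) = H(W4) = H(W1), H(K | W4) = 0, and H(W4 | K) = 0. (Core of Proposition 1: under the capacity and independence constraints of the secure network G⋆, admissibility forces the key K at node P0 to be a deterministic function of the message W4 delivered to node P1, i.e., a secret key of rate H(W1) is transmitted from P0 to P1.) -/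
open MeasureTheory ProbabilityTheory

set_option linter.unusedSectionVars false

namespace EntropyAux
open Real Finset MeasureTheory


noncomputable def pm {Ω : Type*} [MeasurableSpace Ω] (μ : Measure Ω)
    {S : Type*} [MeasurableSpace S] (X : Ω → S) (s : S) : ℝ :=
  (μ (X ⁻¹' {s})).toReal

variable {Ω : Type*} [MeasurableSpace Ω] {μ : Measure Ω} [IsProbabilityMeasure μ]
variable {S T U : Type*}
  [Fintype S] [MeasurableSpace S] [MeasurableSingletonClass S]
  [Fintype T] [MeasurableSpace T] [MeasurableSingletonClass T]
  [Fintype U] [MeasurableSpace U] [MeasurableSingletonClass U]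

lemma pm_nonneg (X : Ω → S) (s : S) : 0 ≤ pm μ X s := ENNReal.toReal_nonneg

lemma ent_eq {X : Ω → S} (hX : Measurable X) :
    ent μ X = ∑ s, Real.negMulLog (pm μ X s) := by
  refine Finset.sum_congr rfl fun s _ => ?_
  rw [pm, Measure.map_apply hX (measurableSet_singleton s)]

lemma pm_comp [DecidableEq T] {X : Ω → S} (hX : Measurable X) (g : S → T) (t : T) :
    pm μ (fun ω => g (X ω)) t = ∑ s ∈ Finset.univ.filter (fun s => g s = t), pm μ X s := by
  unfold pm
  rw [← ENNReal.toReal_sum (fun a _ => measure_ne_top μ _)]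
  congr 1
  rw [sum_measure_preimage_singleton _ (fun y _ => hX (measurableSet_singleton y))]
  congr 1
  ext ω
  simp

lemma pm_sum {X : Ω → S} (hX : Measurable X) : ∑ s, pm μ X s = 1 := by
  unfold pm
  rw [← ENNReal.toReal_sum (fun a _ => measure_ne_top μ _),
    sum_measure_preimage_singleton _ (fun y _ => hX (measurableSet_singleton y))]
  simp

lemma pm_measurable_pair {X : Ω → S} {Y : Ω → T} (hX : Measurable X) (hY : Measurable Y) :
    Measurable (fun ω => (X ω, Y ω)) := hX.prodMk hY

lemma negMulLog_sum_le {ι : Type*} (s : Finset ι) (f : ι → ℝ) (hf : ∀ i ∈ s, 0 ≤ f i) :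
    Real.negMulLog (∑ i ∈ s, f i) ≤ ∑ i ∈ s, Real.negMulLog (f i) := by
  rw [Real.negMulLog, neg_mul, Finset.sum_mul, ← Finset.sum_neg_distrib]
  refine Finset.sum_le_sum fun i hi => ?_
  rcases eq_or_lt_of_le (hf i hi) with h0 | h0
  · simp [← h0]
  · rw [Real.negMulLog, neg_mul, neg_le_neg_iff]
    refine mul_le_mul_of_nonneg_left (Real.log_le_log h0 ?_) (hf i hi)
    exact Finset.single_le_sum hf hi

lemma gibbs {α : Type*} [Fintype α] (p q : α → ℝ) (hp : ∀ a, 0 ≤ p a) (hq : ∀ a, 0 ≤ q a)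
    (hpq : ∀ a, p a ≠ 0 → q a ≠ 0) (hp1 : ∑ a, p a = 1) (hq1 : ∑ a, q a ≤ 1) :
    ∑ a, Real.negMulLog (p a) ≤ ∑ a, -(p a * Real.log (q a)) := by
  have key : ∀ a ∈ Finset.univ, p a * Real.log (q a) - p a * Real.log (p a) ≤ q a - p a := by
    intro a _
    rcases eq_or_lt_of_le (hp a) with h0 | h0
    · simp only [← h0, zero_mul, sub_zero, sub_self]
      exact hq a
    · have hqa : 0 < q a := lt_of_le_of_ne (hq a) (Ne.symm (hpq a (ne_of_gt h0)))
      have hlog := Real.log_le_sub_one_of_pos (div_pos hqa h0)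
      rw [Real.log_div (ne_of_gt hqa) (ne_of_gt h0)] at hlog
      calc p a * Real.log (q a) - p a * Real.log (p a)
          = p a * (Real.log (q a) - Real.log (p a)) := by ring
        _ ≤ p a * (q a / p a - 1) := mul_le_mul_of_nonneg_left hlog (hp a)
        _ = q a - p a := by field_simp
  have h1 := Finset.sum_le_sum key
  rw [Finset.sum_sub_distrib, Finset.sum_sub_distrib] at h1
  have e1 : ∑ a, Real.negMulLog (p a) = -∑ a, p a * Real.log (p a) := by
    rw [← Finset.sum_neg_distrib]
    exact Finset.sum_congr rfl fun a _ => by rw [Real.negMulLog, neg_mul]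
  have e2 : ∑ a, -(p a * Real.log (q a)) = -∑ a, p a * Real.log (q a) :=
    Finset.sum_neg_distrib _
  rw [e1, e2]
  linarith

section filters
variable {M : Type*} [AddCommMonoid M]

lemma sum_filter_fst [DecidableEq S] (s : S) (f : S × T → M) :
    ∑ p ∈ Finset.univ.filter (fun p : S × T => p.1 = s), f p = ∑ t, f (s, t) := by
  classical
  rw [Finset.sum_filter, Fintype.sum_prod_type]
  rw [Finset.sum_eq_single s]
  · simp
  · intro b _ hb; simp [hb]
  · simp

lemma sum_filter_snd [DecidableEq T] (t : T) (f : S × T → M) :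
    ∑ p ∈ Finset.univ.filter (fun p : S × T => p.2 = t), f p = ∑ s, f (s, t) := by
  classical
  rw [Finset.sum_filter, Fintype.sum_prod_type_right]
  rw [Finset.sum_eq_single t]
  · simp
  · intro b _ hb; simp [hb]
  · simp

lemma sum_filter_12 [DecidableEq S] [DecidableEq T] (s : S) (t : T) (f : S × T × U → M) :
    ∑ p ∈ Finset.univ.filter (fun p : S × T × U => (p.1, p.2.1) = (s, t)), f p
      = ∑ u, f (s, t, u) := by
  classical
  rw [Finset.sum_filter, Fintype.sum_prod_type]
  rw [Finset.sum_eq_single s]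
  · rw [Fintype.sum_prod_type, Finset.sum_eq_single t]
    · simp
    · intro b _ hb; simp [hb]
    · simp
  · intro b _ hb
    rw [Fintype.sum_prod_type]
    refine Finset.sum_eq_zero fun c _ => Finset.sum_eq_zero fun u _ => ?_
    simp [Prod.ext_iff, hb]
  · simp

lemma sum_filter_13 [DecidableEq S] [DecidableEq U] (s : S) (u : U) (f : S × T × U → M) :
    ∑ p ∈ Finset.univ.filter (fun p : S × T × U => (p.1, p.2.2) = (s, u)), f p
      = ∑ t, f (s, t, u) := by
  classical
  rw [Finset.sum_filter, Fintype.sum_prod_type]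
  rw [Finset.sum_eq_single s]
  · rw [Fintype.sum_prod_type]
    refine Finset.sum_congr rfl fun t _ => ?_
    rw [Finset.sum_eq_single u]
    · simp
    · intro b _ hb; simp [hb]
    · simp
  · intro b _ hb
    rw [Fintype.sum_prod_type]
    refine Finset.sum_eq_zero fun c _ => Finset.sum_eq_zero fun u' _ => ?_
    simp [Prod.ext_iff, hb]
  · simp

end filters

lemma ent_comp_le {X : Ω → S} (hX : Measurable X) (g : S → T) :
    ent μ (fun ω => g (X ω)) ≤ ent μ X := by
  classical
  have hgX : Measurable (fun ω => g (X ω)) := (measurable_of_countable g).comp hX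
  rw [ent_eq hgX, ent_eq hX,
    ← Finset.sum_fiberwise Finset.univ g (fun s => Real.negMulLog (pm μ X s))]
  refine Finset.sum_le_sum fun t _ => ?_
  rw [pm_comp hX g t]
  exact negMulLog_sum_le _ _ fun i _ => pm_nonneg X i

lemma ent_comp_inj {X : Ω → S} (hX : Measurable X) {g : S → T}
    (hg : Function.Injective g) :
    ent μ (fun ω => g (X ω)) = ent μ X := by
  classical
  have hgX : Measurable (fun ω => g (X ω)) := (measurable_of_countable g).comp hX
  rw [ent_eq hgX, ent_eq hX,
    ← Finset.sum_fiberwise Finset.univ g (fun s => Real.negMulLog (pm μ X s))]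
  refine Finset.sum_congr rfl fun t _ => ?_
  rw [pm_comp hX g t]
  by_cases h : ∃ s, g s = t
  · obtain ⟨s0, rfl⟩ := h
    have : Finset.univ.filter (fun s => g s = g s0) = {s0} := by
      ext a; simp [hg.eq_iff]
    rw [this, Finset.sum_singleton, Finset.sum_singleton]
  · have : Finset.univ.filter (fun s => g s = t) = ∅ := by
      ext a; simp only [Finset.mem_filter, Finset.mem_univ, true_and, Finset.notMem_empty,
        iff_false]
      exact fun hc => h ⟨a, hc⟩
    rw [this]
    simp
lemma pm_fst {X : Ω → S} {Y : Ω → T} (hX : Measurable X) (hY : Measurable Y) (s : S) :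
    pm μ X s = ∑ t, pm μ (fun ω => (X ω, Y ω)) (s, t) := by
  classical
  have h := pm_comp (μ := μ) (hX.prodMk hY) Prod.fst s
  exact h.trans (sum_filter_fst _ _)

lemma pm_snd {X : Ω → S} {Y : Ω → T} (hX : Measurable X) (hY : Measurable Y) (t : T) :
    pm μ Y t = ∑ s, pm μ (fun ω => (X ω, Y ω)) (s, t) := by
  classical
  have h := pm_comp (μ := μ) (hX.prodMk hY) Prod.snd t
  exact h.trans (sum_filter_snd _ _)

lemma pm_12 {X : Ω → S} {Y : Ω → T} {Z : Ω → U} (hX : Measurable X) (hY : Measurable Y)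
    (hZ : Measurable Z) (s : S) (t : T) :
    pm μ (fun ω => (X ω, Y ω)) (s, t) = ∑ u, pm μ (fun ω => (X ω, Y ω, Z ω)) (s, t, u) := by
  classical
  have h := pm_comp (μ := μ) (hX.prodMk (hY.prodMk hZ))
    (fun a : S × T × U => (a.1, a.2.1)) (s, t)
  exact h.trans (sum_filter_12 _ _ _)

lemma pm_13 {X : Ω → S} {Y : Ω → T} {Z : Ω → U} (hX : Measurable X) (hY : Measurable Y)
    (hZ : Measurable Z) (s : S) (u : U) :
    pm μ (fun ω => (X ω, Z ω)) (s, u) = ∑ t, pm μ (fun ω => (X ω, Y ω, Z ω)) (s, t, u) := by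
  classical
  have h := pm_comp (μ := μ) (hX.prodMk (hY.prodMk hZ))
    (fun a : S × T × U => (a.1, a.2.2)) (s, u)
  exact h.trans (sum_filter_13 _ _ _)
lemma ent_pair_le {X : Ω → S} {Y : Ω → T} (hX : Measurable X) (hY : Measurable Y) :
    ent μ (fun ω => (X ω, Y ω)) ≤ ent μ X + ent μ Y := by
  classical
  have hP : Measurable fun ω => (X ω, Y ω) := hX.prodMk hY
  set p : S × T → ℝ := pm μ (fun ω => (X ω, Y ω)) with hpdef
  set q : S × T → ℝ := fun a => pm μ X a.1 * pm μ Y a.2 with hqdef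
  have hple1 : ∀ a : S × T, p a ≤ pm μ X a.1 := by
    intro a
    rw [pm_fst hX hY a.1]
    simpa using Finset.single_le_sum (f := fun t => p (a.1, t))
      (fun t _ => pm_nonneg _ _) (Finset.mem_univ a.2)
  have hple2 : ∀ a : S × T, p a ≤ pm μ Y a.2 := by
    intro a
    rw [pm_snd hX hY a.2]
    simpa using Finset.single_le_sum (f := fun s => p (s, a.2))
      (fun s _ => pm_nonneg _ _) (Finset.mem_univ a.1)
  have hpq : ∀ a : S × T, p a ≠ 0 → q a ≠ 0 := by
    intro a hpa
    have hpa' : 0 < p a := lt_of_le_of_ne (pm_nonneg _ _) (Ne.symm hpa)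
    have h1 : 0 < pm μ X a.1 := lt_of_lt_of_le hpa' (hple1 a)
    have h2 : 0 < pm μ Y a.2 := lt_of_lt_of_le hpa' (hple2 a)
    exact ne_of_gt (mul_pos h1 h2)
  have hq1 : ∑ a : S × T, q a = 1 := by
    rw [Fintype.sum_prod_type]
    simp only [hqdef]
    rw [← Finset.sum_mul_sum, pm_sum hX, pm_sum hY, one_mul]
  have key := gibbs p q (fun a => pm_nonneg _ _)
    (fun a => mul_nonneg (pm_nonneg _ _) (pm_nonneg _ _)) hpq (pm_sum hP) (le_of_eq hq1)
  have hrhs : ∑ a : S × T, -(p a * Real.log (q a))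
      = (∑ s, Real.negMulLog (pm μ X s)) + ∑ t, Real.negMulLog (pm μ Y t) := by
    have term : ∀ a : S × T, -(p a * Real.log (q a))
        = -(p a * Real.log (pm μ X a.1)) + -(p a * Real.log (pm μ Y a.2)) := by
      intro a
      by_cases h : p a = 0
      · simp [h]
      · have hpa' : 0 < p a := lt_of_le_of_ne (pm_nonneg _ _) (Ne.symm h)
        have h1 : pm μ X a.1 ≠ 0 := ne_of_gt (lt_of_lt_of_le hpa' (hple1 a))
        have h2 : pm μ Y a.2 ≠ 0 := ne_of_gt (lt_of_lt_of_le hpa' (hple2 a))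
        rw [hqdef]
        dsimp only
        rw [Real.log_mul h1 h2]
        ring
    rw [Finset.sum_congr rfl fun a _ => term a, Finset.sum_add_distrib]
    congr 1
    · rw [Fintype.sum_prod_type]
      refine Finset.sum_congr rfl fun s _ => ?_
      dsimp only
      rw [Finset.sum_neg_distrib, ← Finset.sum_mul, ← pm_fst hX hY s]
      simp [Real.negMulLog]
    · rw [Fintype.sum_prod_type_right]
      refine Finset.sum_congr rfl fun t _ => ?_
      dsimp only
      rw [Finset.sum_neg_distrib, ← Finset.sum_mul, ← pm_snd hX hY t]
      simp [Real.negMulLog]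
  rw [ent_eq hP, ent_eq hX, ent_eq hY]
  exact key.trans (le_of_eq hrhs)
lemma sum3 {M : Type*} [AddCommMonoid M] (f : S × T × U → M) :
    ∑ a, f a = ∑ s, ∑ t, ∑ u, f (s, t, u) := by
  rw [Fintype.sum_prod_type]
  exact Finset.sum_congr rfl fun s _ => Fintype.sum_prod_type _

lemma ent_submod {X : Ω → S} {Y : Ω → T} {Z : Ω → U}
    (hX : Measurable X) (hY : Measurable Y) (hZ : Measurable Z) :
    ent μ (fun ω => (X ω, Y ω, Z ω)) + ent μ X
      ≤ ent μ (fun ω => (X ω, Y ω)) + ent μ (fun ω => (X ω, Z ω)) := by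
  classical
  have hT : Measurable fun ω => (X ω, Y ω, Z ω) := hX.prodMk (hY.prodMk hZ)
  have hXY : Measurable fun ω => (X ω, Y ω) := hX.prodMk hY
  have hXZ : Measurable fun ω => (X ω, Z ω) := hX.prodMk hZ
  set p : S × T × U → ℝ := pm μ (fun ω => (X ω, Y ω, Z ω)) with hpdef
  set q : S × T × U → ℝ := fun a =>
    if pm μ X a.1 = 0 then 0
    else pm μ (fun ω => (X ω, Y ω)) (a.1, a.2.1) * pm μ (fun ω => (X ω, Z ω)) (a.1, a.2.2)
      / pm μ X a.1 with hqdef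
  have m1 : ∀ s, pm μ X s = ∑ a : T × U, p (s, a) := fun s => pm_fst hX (hY.prodMk hZ) s
  have m12 : ∀ s t, pm μ (fun ω => (X ω, Y ω)) (s, t) = ∑ u, p (s, t, u) :=
    fun s t => pm_12 hX hY hZ s t
  have m13 : ∀ s u, pm μ (fun ω => (X ω, Z ω)) (s, u) = ∑ t, p (s, t, u) :=
    fun s u => pm_13 hX hY hZ s u
  have mXY : ∀ s, ∑ t, pm μ (fun ω => (X ω, Y ω)) (s, t) = pm μ X s :=
    fun s => (pm_fst hX hY s).symm
  have mXZ : ∀ s, ∑ u, pm μ (fun ω => (X ω, Z ω)) (s, u) = pm μ X s :=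
    fun s => (pm_fst hX hZ s).symm
  have hple1 : ∀ a : S × T × U, p a ≤ pm μ X a.1 := by
    intro a
    rw [m1 a.1]
    simpa using Finset.single_le_sum (f := fun c : T × U => p (a.1, c))
      (fun c _ => pm_nonneg _ _) (Finset.mem_univ a.2)
  have hple12 : ∀ a : S × T × U, p a ≤ pm μ (fun ω => (X ω, Y ω)) (a.1, a.2.1) := by
    intro a
    rw [m12]
    simpa using Finset.single_le_sum (f := fun u => p (a.1, a.2.1, u))
      (fun u _ => pm_nonneg _ _) (Finset.mem_univ a.2.2)
  have hple13 : ∀ a : S × T × U, p a ≤ pm μ (fun ω => (X ω, Z ω)) (a.1, a.2.2) := by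
    intro a
    rw [m13]
    simpa using Finset.single_le_sum (f := fun t => p (a.1, t, a.2.2))
      (fun t _ => pm_nonneg _ _) (Finset.mem_univ a.2.1)
  have hq0 : ∀ a, 0 ≤ q a := by
    intro a
    rw [hqdef]
    dsimp only
    split
    · exact le_refl 0
    · exact div_nonneg (mul_nonneg (pm_nonneg _ _) (pm_nonneg _ _)) (pm_nonneg _ _)
  have hpq : ∀ a, p a ≠ 0 → q a ≠ 0 := by
    intro a h
    have hp' : 0 < p a := lt_of_le_of_ne (pm_nonneg _ _) (Ne.symm h)
    have h1 : 0 < pm μ X a.1 := lt_of_lt_of_le hp' (hple1 a)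
    have h2 : 0 < pm μ (fun ω => (X ω, Y ω)) (a.1, a.2.1) := lt_of_lt_of_le hp' (hple12 a)
    have h3 : 0 < pm μ (fun ω => (X ω, Z ω)) (a.1, a.2.2) := lt_of_lt_of_le hp' (hple13 a)
    rw [hqdef]
    dsimp only
    rw [if_neg (ne_of_gt h1)]
    exact ne_of_gt (div_pos (mul_pos h2 h3) h1)
  have hqsum : ∑ a : S × T × U, q a ≤ 1 := by
    rw [Fintype.sum_prod_type]
    have hrow : ∀ s, ∑ c : T × U, q (s, c) = if pm μ X s = 0 then 0 else pm μ X s := by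
      intro s
      by_cases h : pm μ X s = 0
      · rw [if_pos h]
        refine Finset.sum_eq_zero fun c _ => ?_
        rw [hqdef]
        dsimp only
        rw [if_pos h]
      · rw [if_neg h, Fintype.sum_prod_type]
        have hq' : ∀ t u, q (s, t, u)
            = pm μ (fun ω => (X ω, Y ω)) (s, t)
              * (pm μ (fun ω => (X ω, Z ω)) (s, u) / pm μ X s) := by
          intro t u
          rw [hqdef]
          dsimp only
          rw [if_neg h, mul_div_assoc]
        calc ∑ t, ∑ u, q (s, t, u)
            = ∑ t, pm μ (fun ω => (X ω, Y ω)) (s, t)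
                * ((∑ u, pm μ (fun ω => (X ω, Z ω)) (s, u)) / pm μ X s) := by
              refine Finset.sum_congr rfl fun t _ => ?_
              rw [Finset.sum_congr rfl fun u _ => hq' t u, ← Finset.mul_sum, ← Finset.sum_div]
          _ = ∑ t, pm μ (fun ω => (X ω, Y ω)) (s, t) := by
              rw [mXZ s, div_self h]
              simp
          _ = pm μ X s := mXY s
    calc ∑ s, ∑ c : T × U, q (s, c) = ∑ s, if pm μ X s = 0 then 0 else pm μ X s :=
          Finset.sum_congr rfl fun s _ => hrow s
      _ ≤ ∑ s, pm μ X s := by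
          refine Finset.sum_le_sum fun s _ => ?_
          split
          · exact pm_nonneg _ _
          · exact le_refl _
      _ = 1 := pm_sum hX
  have key := gibbs p q (fun a => pm_nonneg _ _) hq0 hpq (pm_sum hT) hqsum
  have term : ∀ a : S × T × U, -(p a * Real.log (q a))
      = -(p a * Real.log (pm μ (fun ω => (X ω, Y ω)) (a.1, a.2.1)))
        + -(p a * Real.log (pm μ (fun ω => (X ω, Z ω)) (a.1, a.2.2)))
        + p a * Real.log (pm μ X a.1) := by
    intro a
    by_cases h : p a = 0
    · simp [h]
    · have hp' : 0 < p a := lt_of_le_of_ne (pm_nonneg _ _) (Ne.symm h)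
      have h1 : 0 < pm μ X a.1 := lt_of_lt_of_le hp' (hple1 a)
      have h2 : 0 < pm μ (fun ω => (X ω, Y ω)) (a.1, a.2.1) := lt_of_lt_of_le hp' (hple12 a)
      have h3 : 0 < pm μ (fun ω => (X ω, Z ω)) (a.1, a.2.2) := lt_of_lt_of_le hp' (hple13 a)
      rw [hqdef]
      dsimp only
      rw [if_neg (ne_of_gt h1), Real.log_div (ne_of_gt (mul_pos h2 h3)) (ne_of_gt h1),
        Real.log_mul (ne_of_gt h2) (ne_of_gt h3)]
      ring
  have s12 : ∑ a : S × T × U, -(p a * Real.log (pm μ (fun ω => (X ω, Y ω)) (a.1, a.2.1)))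
      = ∑ b : S × T, Real.negMulLog (pm μ (fun ω => (X ω, Y ω)) b) := by
    rw [sum3, Fintype.sum_prod_type]
    refine Finset.sum_congr rfl fun s _ => Finset.sum_congr rfl fun t _ => ?_
    dsimp only
    rw [Finset.sum_neg_distrib, ← Finset.sum_mul, ← m12 s t]
    simp [Real.negMulLog]
  have s13 : ∑ a : S × T × U, -(p a * Real.log (pm μ (fun ω => (X ω, Z ω)) (a.1, a.2.2)))
      = ∑ b : S × U, Real.negMulLog (pm μ (fun ω => (X ω, Z ω)) b) := by
    rw [sum3, Fintype.sum_prod_type]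
    refine Finset.sum_congr rfl fun s _ => ?_
    rw [Finset.sum_comm]
    refine Finset.sum_congr rfl fun u _ => ?_
    dsimp only
    rw [Finset.sum_neg_distrib, ← Finset.sum_mul, ← m13 s u]
    simp [Real.negMulLog]
  have sX : ∑ a : S × T × U, p a * Real.log (pm μ X a.1)
      = -∑ s, Real.negMulLog (pm μ X s) := by
    rw [Fintype.sum_prod_type, ← Finset.sum_neg_distrib]
    refine Finset.sum_congr rfl fun s _ => ?_
    dsimp only
    rw [← Finset.sum_mul, ← m1 s]
    simp [Real.negMulLog]
  have hsplit : ∑ a : S × T × U, -(p a * Real.log (q a))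
      = (∑ b : S × T, Real.negMulLog (pm μ (fun ω => (X ω, Y ω)) b))
        + (∑ b : S × U, Real.negMulLog (pm μ (fun ω => (X ω, Z ω)) b))
        - ∑ s, Real.negMulLog (pm μ X s) := by
    rw [Finset.sum_congr rfl fun a _ => term a, Finset.sum_add_distrib, Finset.sum_add_distrib,
      s12, s13, sX]
    ring
  rw [ent_eq hT, ent_eq hX, ent_eq hXY, ent_eq hXZ]
  have := key.trans (le_of_eq hsplit)
  linarith

end EntropyAux

set_option maxHeartbeats 2000000 in
open EntropyAux in
theorem stmt_11
    {Ω : Type*} [MeasurableSpace Ω] (μ : Measure Ω) [IsProbabilityMeasure μ]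
    {SK S1 S3 S4 : Type*}
    [Fintype SK] [Nonempty SK] [MeasurableSpace SK] [MeasurableSingletonClass SK]
    [Fintype S1] [Nonempty S1] [MeasurableSpace S1] [MeasurableSingletonClass S1]
    [Fintype S3] [Nonempty S3] [MeasurableSpace S3] [MeasurableSingletonClass S3]
    [Fintype S4] [Nonempty S4] [MeasurableSpace S4] [MeasurableSingletonClass S4]
    (K : Ω → SK) (W₁ : Ω → S1) (W₃ : Ω → S3) (W₄ : Ω → S4)
    (hK : Measurable K) (hW₁ : Measurable W₁) (hW₃ : Measurable W₃) (hW₄ : Measurable W₄)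
    (h13 : mutInfo μ W₁ W₃ = 0)
    (hK3 : condEnt μ W₁ (fun ω => (K ω, W₃ ω)) = 0)
    (h34 : condEnt μ W₁ (fun ω => (W₃ ω, W₄ ω)) = 0)
    (hind : mutInfo μ W₁ (fun ω => (K ω, W₄ ω)) = 0)
    (hKle : ent μ K ≤ ent μ W₁)
    (hW₄le : ent μ W₄ ≤ ent μ W₁)
    (hW₃le : ent μ W₃ ≤ ent μ W₁) :
    ent μ K = ent μ W₁ ∧ ent μ W₄ = ent μ W₁ ∧
      condEnt μ K W₄ = 0 ∧ condEnt μ W₄ K = 0 := by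
  unfold mutInfo at h13 hind
  unfold condEnt at hK3 h34 ⊢
  -- measurability of the various tuples
  have hP13 : Measurable fun ω => (W₁ ω, W₃ ω) := hW₁.prodMk hW₃
  have hK3m : Measurable fun ω => (W₁ ω, (K ω, W₃ ω)) := hW₁.prodMk (hK.prodMk hW₃)
  have h34m : Measurable fun ω => (W₁ ω, (W₃ ω, W₄ ω)) := hW₁.prodMk (hW₃.prodMk hW₄)
  have hTm : Measurable fun ω => ((W₁ ω, W₃ ω), K ω, W₄ ω) :=
    hP13.prodMk (hK.prodMk hW₄)
  -- E1 : H(W1,W3) = H(W1) + H(W3)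
  have E1 : ent μ (fun ω => (W₁ ω, W₃ ω)) = ent μ W₁ + ent μ W₃ := by linarith
  -- Step A : H(K) = H(W1)
  have I1 : ent μ (fun ω => (W₁ ω, W₃ ω)) ≤ ent μ (fun ω => (W₁ ω, (K ω, W₃ ω))) :=
    ent_comp_le hK3m (fun a : S1 × SK × S3 => (a.1, a.2.2))
  have I2 : ent μ (fun ω => (K ω, W₃ ω)) ≤ ent μ K + ent μ W₃ := ent_pair_le hK hW₃
  have aEq : ent μ K = ent μ W₁ := le_antisymm hKle (by linarith)
  -- Step B : H(W4) = H(W1)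
  have I3 : ent μ (fun ω => (W₁ ω, W₃ ω)) ≤ ent μ (fun ω => (W₁ ω, (W₃ ω, W₄ ω))) :=
    ent_comp_le h34m (fun a : S1 × S3 × S4 => (a.1, a.2.1))
  have I4 : ent μ (fun ω => (W₃ ω, W₄ ω)) ≤ ent μ W₃ + ent μ W₄ := ent_pair_le hW₃ hW₄
  have dEq : ent μ W₄ = ent μ W₁ := le_antisymm hW₄le (by linarith)
  -- relabelings
  have B1 : ent μ (fun ω => (W₁ ω, (K ω, W₃ ω)))
      = ent μ (fun ω => ((W₁ ω, W₃ ω), K ω)) := by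
    have hg : Function.Injective
        (fun a : (S1 × S3) × SK => (a.1.1, (a.2, a.1.2))) := by
      intro ⟨⟨a, b⟩, c⟩ ⟨⟨d, e⟩, f⟩ h
      simp_all [Prod.ext_iff]
    exact ent_comp_inj (hP13.prodMk hK) hg
  have B2 : ent μ (fun ω => (W₁ ω, (W₃ ω, W₄ ω)))
      = ent μ (fun ω => ((W₁ ω, W₃ ω), W₄ ω)) := by
    have hg : Function.Injective
        (fun a : (S1 × S3) × S4 => (a.1.1, (a.1.2, a.2))) := by
      intro ⟨⟨a, b⟩, c⟩ ⟨⟨d, e⟩, f⟩ h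
      simp_all [Prod.ext_iff]
    exact ent_comp_inj (hP13.prodMk hW₄) hg
  -- squeeze : H((W1,W3),K) = H(W1)+H(W3) and H((W1,W3),W4) = H(W1)+H(W3)
  have hPKlow : ent μ (fun ω => (W₁ ω, W₃ ω)) ≤ ent μ (fun ω => ((W₁ ω, W₃ ω), K ω)) :=
    ent_comp_le (hP13.prodMk hK) Prod.fst
  have hPWlow : ent μ (fun ω => (W₁ ω, W₃ ω)) ≤ ent μ (fun ω => ((W₁ ω, W₃ ω), W₄ ω)) :=
    ent_comp_le (hP13.prodMk hW₄) Prod.fst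
  have hPK : ent μ (fun ω => ((W₁ ω, W₃ ω), K ω)) = ent μ W₁ + ent μ W₃ := by linarith
  have hPW : ent μ (fun ω => ((W₁ ω, W₃ ω), W₄ ω)) = ent μ W₁ + ent μ W₃ := by linarith
  -- submodularity
  have SM := ent_submod (μ := μ) hP13 hK hW₄
  -- project triple down to (W1,(K,W4))
  have I5 : ent μ (fun ω => (W₁ ω, (K ω, W₄ ω)))
      ≤ ent μ (fun ω => ((W₁ ω, W₃ ω), K ω, W₄ ω)) :=
    ent_comp_le hTm (fun a : (S1 × S3) × SK × S4 => (a.1.1, a.2))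
  have hKW4le : ent μ (fun ω => (K ω, W₄ ω)) ≤ ent μ W₁ := by linarith
  have hKW4ge : ent μ W₄ ≤ ent μ (fun ω => (K ω, W₄ ω)) :=
    ent_comp_le (hK.prodMk hW₄) Prod.snd
  have hswap : ent μ (fun ω => (W₄ ω, K ω)) = ent μ (fun ω => (K ω, W₄ ω)) :=
    ent_comp_inj (hK.prodMk hW₄) Prod.swap_injective
  exact ⟨aEq, dEq, by linarith, by linarith⟩
end

section
/- Let N be a positive integer, let S0, S1 be independent random variables on a probability space with values in finite nonempty sets, let a_1, …, a_N and b be nonnegative reals with H(S0) = a_1 + ⋯ + a_N and H(S1) = b, and let U_1, …, U_N, V be random variables with values in finite nonempty sets such that: H(U_i | S0) = 0 and H(U_i) ≤ a_i for each i, H(V | S1) = 0 and H(V) ≤ b, and H(S0, S1 | U_1, …, U_N, V) = 0. Then H(U_i) = a_i for every i, H(V) = b, and H(U_1, …, U_N, V) = a_1 + ⋯ + a_N + b (so U_1, …, U_N, V are mutually independent). -/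
open MeasureTheory ProbabilityTheory

section Helpers
open MeasureTheory ProbabilityTheory Real Finset
open scoped Classical
-- subadditivity of negMulLog
lemma nml_add_le {x y : ℝ} (hx : 0 ≤ x) (hy : 0 ≤ y) :
    negMulLog (x + y) ≤ negMulLog x + negMulLog y := by
  rcases eq_or_lt_of_le hx with h | hx0
  · simp [← h]
  rcases eq_or_lt_of_le hy with h | hy0
  · simp [← h]
  have hxy : 0 < x + y := by linarith
  simp only [negMulLog, neg_mul]
  have h1 : x * Real.log x ≤ x * Real.log (x + y) :=
    mul_le_mul_of_nonneg_left (Real.log_le_log hx0 (by linarith)) hx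
  have h2 : y * Real.log y ≤ y * Real.log (x + y) :=
    mul_le_mul_of_nonneg_left (Real.log_le_log hy0 (by linarith)) hy
  nlinarith [Real.log_le_log hx0 (show x ≤ x + y by linarith)]

lemma nml_sum_le {ι : Type*} (s : Finset ι) (f : ι → ℝ) (hf : ∀ i ∈ s, 0 ≤ f i) :
    negMulLog (∑ i ∈ s, f i) ≤ ∑ i ∈ s, negMulLog (f i) := by
  classical
  induction s using Finset.induction with
  | empty => simp
  | insert a s hi ih =>
    rw [Finset.sum_insert hi, Finset.sum_insert hi]
    refine le_trans (nml_add_le (hf a (by simp)) (Finset.sum_nonneg fun i him => hf i (by simp [him]))) ?_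
    exact add_le_add_right (ih fun i him => hf i (by simp [him])) _

-- Gibbs inequality
lemma gibbs_s12 {ι : Type*} [Fintype ι] {p q : ι → ℝ} (hp : ∀ i, 0 ≤ p i) (hq : ∀ i, 0 ≤ q i)
    (hpq : ∑ i, p i = ∑ i, q i) (hac : ∀ i, q i = 0 → p i = 0) :
    ∑ i, negMulLog (p i) ≤ ∑ i, -(p i * Real.log (q i)) := by
  have key : ∀ i, negMulLog (p i) + p i * Real.log (q i) ≤ q i - p i := by
    intro i
    rcases eq_or_lt_of_le (hp i) with h | hpi
    · simp [← h, hq i]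
    have hqi : 0 < q i := by
      rcases eq_or_lt_of_le (hq i) with h | h
      · exact absurd (hac i h.symm) (by positivity)
      · exact h
    have hlog : Real.log (q i / p i) ≤ q i / p i - 1 :=
      Real.log_le_sub_one_of_pos (by positivity)
    have := mul_le_mul_of_nonneg_left hlog (hp i)
    rw [Real.log_div (ne_of_gt hqi) (ne_of_gt hpi)] at this
    have hps : p i * (q i / p i - 1) = q i - p i := by field_simp
    rw [hps] at this
    simp only [negMulLog, neg_mul]
    nlinarith
  have hsum : ∑ i, (negMulLog (p i) + p i * Real.log (q i)) ≤ ∑ i, (q i - p i) :=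
    Finset.sum_le_sum fun i _ => key i
  rw [Finset.sum_sub_distrib] at hsum
  rw [Finset.sum_add_distrib] at hsum
  have : ∑ i, -(p i * Real.log (q i)) = -∑ i, p i * Real.log (q i) := by
    rw [Finset.sum_neg_distrib]
  rw [this]
  linarith [hpq]

variable {Ω : Type*} [MeasurableSpace Ω] {μ : Measure Ω} [IsProbabilityMeasure μ]
variable {S : Type*} [Fintype S] [MeasurableSpace S] [MeasurableSingletonClass S]
variable {X : Ω → S}
variable {S' : Type*} [Fintype S'] [MeasurableSpace S'] [MeasurableSingletonClass S']

lemma meas_apply_eq_sum (ν : Measure S) [IsFiniteMeasure ν] (A : Set S) :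
    (ν A).toReal = ∑ s ∈ Finset.univ.filter (fun s => s ∈ A), (ν {s}).toReal := by
  classical
  have h := sum_measure_preimage_singleton (μ := ν)
    (Finset.univ.filter (fun s => s ∈ A)) (f := id)
    (fun y _ => by simpa using measurableSet_singleton y)
  simp only [Set.preimage_id] at h
  have hA : (↑(Finset.univ.filter (fun s => s ∈ A)) : Set S) = A := by
    ext s; simp
  rw [hA] at h
  rw [← h]
  exact ENNReal.toReal_sum fun a _ => measure_ne_top ν _

lemma pmf_nonneg (X : Ω → S) (s : S) : 0 ≤ ((μ.map X) {s}).toReal := ENNReal.toReal_nonneg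

lemma sum_pmf (hX : Measurable X) : ∑ s : S, ((μ.map X) {s}).toReal = 1 := by
  have : IsProbabilityMeasure (μ.map X) := Measure.isProbabilityMeasure_map hX.aemeasurable
  have h := meas_apply_eq_sum (μ.map X) Set.univ
  simpa using h.symm

lemma pmf_comp (hX : Measurable X) (f : S → S') (t : S') :
    ((μ.map (fun ω => f (X ω))) {t}).toReal
      = ∑ s ∈ Finset.univ.filter (fun s => f s = t), ((μ.map X) {s}).toReal := by
  classical
  have hf : Measurable f := measurable_of_finite f
  have h1 : μ.map (fun ω => f (X ω)) = (μ.map X).map f := (Measure.map_map hf hX).symm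
  rw [h1, Measure.map_apply hf (measurableSet_singleton t)]
  have : IsFiniteMeasure (μ.map X) := ⟨by rw [Measure.map_apply hX MeasurableSet.univ]; exact measure_lt_top _ _⟩
  rw [meas_apply_eq_sum (μ.map X) (f ⁻¹' {t})]
  simp [Set.mem_preimage]

lemma ent_nonneg (hX : Measurable X) : 0 ≤ ent μ X := by
  refine Finset.sum_nonneg fun s _ => Real.negMulLog_nonneg ENNReal.toReal_nonneg ?_
  have : IsProbabilityMeasure (μ.map X) := Measure.isProbabilityMeasure_map hX.aemeasurable
  calc ((μ.map X) {s}).toReal ≤ ((μ.map X) Set.univ).toReal :=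
      ENNReal.toReal_mono (measure_ne_top _ _) (measure_mono (Set.subset_univ _))
    _ = 1 := by simp

lemma ent_comp_le (hX : Measurable X) (f : S → S') :
    ent μ (fun ω => f (X ω)) ≤ ent μ X := by
  classical
  unfold ent
  calc ∑ t : S', Real.negMulLog ((μ.map fun ω => f (X ω)) {t}).toReal
      = ∑ t : S', Real.negMulLog (∑ s ∈ Finset.univ.filter (fun s => f s = t),
          ((μ.map X) {s}).toReal) := by
        refine Finset.sum_congr rfl fun t _ => ?_
        rw [pmf_comp hX f t]
    _ ≤ ∑ t : S', ∑ s ∈ Finset.univ.filter (fun s => f s = t),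
          Real.negMulLog ((μ.map X) {s}).toReal := by
        refine Finset.sum_le_sum fun t _ => ?_
        exact nml_sum_le _ _ fun s _ => ENNReal.toReal_nonneg
    _ = ∑ s : S, Real.negMulLog ((μ.map X) {s}).toReal :=
        Finset.sum_fiberwise _ f _

lemma ent_comp_equiv (hX : Measurable X) (e : S ≃ S') :
    ent μ (fun ω => e (X ω)) = ent μ X := by
  classical
  unfold ent
  rw [← Equiv.sum_comp e (fun t => Real.negMulLog ((μ.map fun ω => e (X ω)) {t}).toReal)]
  refine Finset.sum_congr rfl fun s _ => ?_
  have hme : Measurable e := measurable_of_finite e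
  have : (μ.map fun ω => e (X ω)) {e s} = (μ.map X) {s} := by
    rw [show (fun ω => e (X ω)) = e ∘ X from rfl, ← Measure.map_map hme hX,
      Measure.map_apply hme (measurableSet_singleton _)]
    congr 1
    ext u; simp [e.injective.eq_iff]
  rw [this]

variable {T : Type*} [Fintype T] [MeasurableSpace T] [MeasurableSingletonClass T]
variable {Y : Ω → T}

lemma pmf_fst (hX : Measurable X) (hY : Measurable Y) (s : S) :
    ((μ.map X) {s}).toReal
      = ∑ t : T, ((μ.map fun ω => (X ω, Y ω)) {(s, t)}).toReal := by
  classical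
  have hZ : Measurable fun ω => (X ω, Y ω) := hX.prodMk hY
  have h := pmf_comp (μ := μ) hZ Prod.fst s
  rw [show μ.map X = μ.map (fun ω => ((X ω, Y ω)).1) from rfl, h,
    Finset.sum_filter, Fintype.sum_prod_type, Finset.sum_comm]
  simp

lemma pmf_snd (hX : Measurable X) (hY : Measurable Y) (t : T) :
    ((μ.map Y) {t}).toReal
      = ∑ s : S, ((μ.map fun ω => (X ω, Y ω)) {(s, t)}).toReal := by
  classical
  have hZ : Measurable fun ω => (X ω, Y ω) := hX.prodMk hY
  have h := pmf_comp (μ := μ) hZ Prod.snd t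
  rw [show μ.map Y = μ.map (fun ω => ((X ω, Y ω)).2) from rfl, h,
    Finset.sum_filter, Fintype.sum_prod_type]
  simp

lemma ent_pair_le (hX : Measurable X) (hY : Measurable Y) :
    ent μ (fun ω => (X ω, Y ω)) ≤ ent μ X + ent μ Y := by
  classical
  have hZ : Measurable fun ω => (X ω, Y ω) := hX.prodMk hY
  set p : S × T → ℝ := fun z => ((μ.map fun ω => (X ω, Y ω)) {z}).toReal with hp_def
  set pX : S → ℝ := fun s => ((μ.map X) {s}).toReal with hpX_def
  set pY : T → ℝ := fun t => ((μ.map Y) {t}).toReal with hpY_def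
  have hp : ∀ z, 0 ≤ p z := fun z => ENNReal.toReal_nonneg
  have hpXn : ∀ s, 0 ≤ pX s := fun s => ENNReal.toReal_nonneg
  have hpYn : ∀ t, 0 ≤ pY t := fun t => ENNReal.toReal_nonneg
  have hmargX : ∀ s, pX s = ∑ t : T, p (s, t) := fun s => pmf_fst hX hY s
  have hmargY : ∀ t, pY t = ∑ s : S, p (s, t) := fun t => pmf_snd hX hY t
  have hple1 : ∀ z : S × T, p z ≤ pX z.1 := by
    intro z
    rw [hmargX]
    exact Finset.single_le_sum (fun t _ => hp (z.1, t)) (Finset.mem_univ z.2)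
  have hple2 : ∀ z : S × T, p z ≤ pY z.2 := by
    intro z
    rw [hmargY]
    exact Finset.single_le_sum (fun s _ => hp (s, z.2)) (Finset.mem_univ z.1)
  have hq : ∀ z : S × T, 0 ≤ pX z.1 * pY z.2 := fun z => mul_nonneg (hpXn _) (hpYn _)
  have hsum : ∑ z : S × T, p z = ∑ z : S × T, pX z.1 * pY z.2 := by
    rw [sum_pmf hZ, Fintype.sum_prod_type]
    simp only [hpX_def, hpY_def, ← Finset.mul_sum, sum_pmf hY, mul_one, sum_pmf hX]
  have hac : ∀ z : S × T, pX z.1 * pY z.2 = 0 → p z = 0 := by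
    intro z hz
    rcases mul_eq_zero.mp hz with h | h
    · exact le_antisymm (h ▸ hple1 z) (hp z)
    · exact le_antisymm (h ▸ hple2 z) (hp z)
  have hgibbs := gibbs_s12 (p := p) (q := fun z => pX z.1 * pY z.2) hp hq hsum hac
  have hsplit : ∑ z : S × T, -(p z * Real.log (pX z.1 * pY z.2))
      = (∑ z : S × T, -(p z * Real.log (pX z.1)))
        + ∑ z : S × T, -(p z * Real.log (pY z.2)) := by
    rw [← Finset.sum_add_distrib]
    refine Finset.sum_congr rfl fun z _ => ?_
    by_cases hz : p z = 0
    · simp [hz]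
    · have h1 : pX z.1 ≠ 0 := fun h => hz (le_antisymm (h ▸ hple1 z) (hp z))
      have h2 : pY z.2 ≠ 0 := fun h => hz (le_antisymm (h ▸ hple2 z) (hp z))
      rw [Real.log_mul h1 h2]
      ring
  have hX' : ∑ z : S × T, -(p z * Real.log (pX z.1)) = ent μ X := by
    rw [Fintype.sum_prod_type]
    unfold ent
    refine Finset.sum_congr rfl fun s _ => ?_
    rw [show ∑ t : T, -(p (s, t) * Real.log (pX s))
        = -((∑ t : T, p (s, t)) * Real.log (pX s)) by
      rw [Finset.sum_mul, ← Finset.sum_neg_distrib]]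
    rw [← hmargX s]
    simp [Real.negMulLog, hpX_def]
  have hY' : ∑ z : S × T, -(p z * Real.log (pY z.2)) = ent μ Y := by
    rw [show ∑ z : S × T, -(p z * Real.log (pY z.2))
        = ∑ t : T, ∑ s : S, -(p (s, t) * Real.log (pY t)) by
      rw [Fintype.sum_prod_type]; rw [Finset.sum_comm]]
    unfold ent
    refine Finset.sum_congr rfl fun t _ => ?_
    rw [show ∑ s : S, -(p (s, t) * Real.log (pY t))
        = -((∑ s : S, p (s, t)) * Real.log (pY t)) by
      rw [Finset.sum_mul, ← Finset.sum_neg_distrib]]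
    rw [← hmargY t]
    simp [Real.negMulLog, hpY_def]
  calc ent μ (fun ω => (X ω, Y ω)) = ∑ z : S × T, Real.negMulLog (p z) := rfl
    _ ≤ ∑ z : S × T, -(p z * Real.log (pX z.1 * pY z.2)) := hgibbs
    _ = ent μ X + ent μ Y := by rw [hsplit, hX', hY']

lemma ent_indep (hX : Measurable X) (hY : Measurable Y) (hind : IndepFun X Y μ) :
    ent μ (fun ω => (X ω, Y ω)) = ent μ X + ent μ Y := by
  classical
  have hZ : Measurable fun ω => (X ω, Y ω) := hX.prodMk hY
  have hprod : ∀ (s : S) (t : T), ((μ.map fun ω => (X ω, Y ω)) {(s, t)}).toReal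
      = ((μ.map X) {s}).toReal * ((μ.map Y) {t}).toReal := by
    intro s t
    rw [Measure.map_apply hZ (measurableSet_singleton _),
      Measure.map_apply hX (measurableSet_singleton _),
      Measure.map_apply hY (measurableSet_singleton _)]
    have hpre : (fun ω => (X ω, Y ω)) ⁻¹' {(s, t)} = X ⁻¹' {s} ∩ Y ⁻¹' {t} := by
      ext ω; simp [Prod.ext_iff]
    rw [hpre, hind.measure_inter_preimage_eq_mul {s} {t} (measurableSet_singleton _)
      (measurableSet_singleton _), ENNReal.toReal_mul]
  unfold ent
  rw [Fintype.sum_prod_type]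
  have : ∀ s : S, ∑ t : T, Real.negMulLog (((μ.map fun ω => (X ω, Y ω)) {(s, t)}).toReal)
      = Real.negMulLog (((μ.map X) {s}).toReal) * (∑ t : T, ((μ.map Y) {t}).toReal)
        + ((μ.map X) {s}).toReal * ∑ t : T, Real.negMulLog (((μ.map Y) {t}).toReal) := by
    intro s
    rw [Finset.mul_sum, Finset.mul_sum, ← Finset.sum_add_distrib]
    refine Finset.sum_congr rfl fun t _ => ?_
    rw [hprod s t, Real.negMulLog_mul]
    ring
  rw [Finset.sum_congr rfl fun s _ => this s, Finset.sum_add_distrib, sum_pmf hY]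
  simp only [mul_one, ← Finset.sum_mul, sum_pmf hX]
  ring

universe u

lemma ent_pi_le : ∀ (N : ℕ) (TT : Fin N → Type u) (_ : ∀ i, Fintype (TT i))
    (_ : ∀ i, MeasurableSpace (TT i)) (_ : ∀ i, MeasurableSingletonClass (TT i))
    (W : ∀ i, Ω → TT i), (∀ i, Measurable (W i)) →
    ent μ (fun ω => fun i => W i ω) ≤ ∑ i, ent μ (W i) := by
  intro N
  induction N with
  | zero =>
    intro TT instF instM instS W hW
    simp only [Finset.univ_eq_empty, Finset.sum_empty]
    unfold ent
    have hsub : Subsingleton (∀ i : Fin 0, TT i) := ⟨fun a b => funext fun i => i.elim0⟩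
    have hh : ∀ z : (∀ i : Fin 0, TT i), Real.negMulLog
        (((μ.map fun ω => fun i => W i ω) ({z} : Set _)).toReal) = 0 := by
      intro z
      have hz : ({z} : Set (∀ i : Fin 0, TT i)) = Set.univ := by
        ext w; simp [hsub.elim w z]
      have : IsProbabilityMeasure (μ.map fun ω => fun i => W i ω) :=
        Measure.isProbabilityMeasure_map (measurable_pi_lambda _ hW).aemeasurable
      rw [hz]
      simp
    rw [Finset.sum_congr rfl fun z _ => hh z]
    simp
  | succ n ih =>
    intro TT instF instM instS W hW
    have hZm : Measurable (fun ω => (W 0 ω, fun i : Fin n => W i.succ ω)) :=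
      (hW 0).prodMk (measurable_pi_lambda _ fun i => hW i.succ)
    have hcomp : (fun ω => fun i => W i ω)
        = fun ω => Fin.consEquiv TT ((W 0 ω, fun i : Fin n => W i.succ ω)) := by
      funext ω
      exact (Fin.cons_self_tail (fun i => W i ω)).symm
    calc ent μ (fun ω => fun i => W i ω)
        = ent μ (fun ω => (W 0 ω, fun i : Fin n => W i.succ ω)) := by
          rw [hcomp]; exact ent_comp_equiv hZm (Fin.consEquiv TT)
      _ ≤ ent μ (W 0) + ent μ (fun ω => fun i : Fin n => W i.succ ω) :=
          ent_pair_le (hW 0) (measurable_pi_lambda _ fun i => hW i.succ)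
      _ ≤ ent μ (W 0) + ∑ i : Fin n, ent μ (W i.succ) := by
          exact add_le_add_right (ih (fun i => TT i.succ) (fun i => instF i.succ)
            (fun i => instM i.succ) (fun i => instS i.succ)
            (fun i => W i.succ) (fun i => hW i.succ)) _
      _ = ∑ i : Fin (n + 1), ent μ (W i) := (Fin.sum_univ_succ (fun i => ent μ (W i))).symm


end Helpers

theorem stmt_12
    {Ω : Type*} [MeasurableSpace Ω] (μ : Measure Ω) [IsProbabilityMeasure μ]
    (N : ℕ) (hN : 0 < N)
    {T0 T1 : Type*}
    [Fintype T0] [Nonempty T0] [MeasurableSpace T0] [MeasurableSingletonClass T0]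
    [Fintype T1] [Nonempty T1] [MeasurableSpace T1] [MeasurableSingletonClass T1]
    {TU : Fin N → Type*}
    [∀ i, Fintype (TU i)] [∀ i, Nonempty (TU i)]
    [∀ i, MeasurableSpace (TU i)] [∀ i, MeasurableSingletonClass (TU i)]
    {TV : Type*}
    [Fintype TV] [Nonempty TV] [MeasurableSpace TV] [MeasurableSingletonClass TV]
    (S₀ : Ω → T0) (S₁ : Ω → T1) (U : ∀ i : Fin N, Ω → TU i) (V : Ω → TV)
    (hS₀ : Measurable S₀) (hS₁ : Measurable S₁)
    (hU : ∀ i, Measurable (U i)) (hV : Measurable V)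
    (hindep : IndepFun S₀ S₁ μ)
    (a : Fin N → ℝ) (b : ℝ) (ha : ∀ i, 0 ≤ a i) (hb : 0 ≤ b)
    (hS₀rate : ent μ S₀ = ∑ i, a i) (hS₁rate : ent μ S₁ = b)
    (hUfun : ∀ i, condEnt μ (U i) S₀ = 0) (hUcap : ∀ i, ent μ (U i) ≤ a i)
    (hVfun : condEnt μ V S₁ = 0) (hVcap : ent μ V ≤ b)
    (hdec : condEnt μ (fun ω => (S₀ ω, S₁ ω)) (fun ω => ((fun i => U i ω), V ω)) = 0) :
    (∀ i, ent μ (U i) = a i) ∧ ent μ V = b ∧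
      ent μ (fun ω => ((fun i => U i ω), V ω)) = (∑ i, a i) + b := by
  classical
  have hPi : Measurable (fun ω => fun i => U i ω) := measurable_pi_lambda _ hU
  have hW : Measurable (fun ω => ((fun i => U i ω), V ω)) := hPi.prodMk hV
  have step1 : ent μ (fun ω => (S₀ ω, S₁ ω)) = (∑ i, a i) + b := by
    rw [ent_indep hS₀ hS₁ hindep, hS₀rate, hS₁rate]
  have hdec' : ent μ (fun ω => ((S₀ ω, S₁ ω), ((fun i => U i ω), V ω)))
      = ent μ (fun ω => ((fun i => U i ω), V ω)) := by
    have h := hdec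
    simp only [condEnt, sub_eq_zero] at h
    exact h
  have step2 : ent μ (fun ω => (S₀ ω, S₁ ω)) ≤ ent μ (fun ω => ((fun i => U i ω), V ω)) := by
    have hXZ : Measurable (fun ω => ((S₀ ω, S₁ ω), ((fun i => U i ω), V ω))) :=
      (hS₀.prodMk hS₁).prodMk hW
    have h := ent_comp_le (μ := μ) hXZ Prod.fst
    rw [hdec'] at h
    exact h
  have step3 : ent μ (fun ω => ((fun i => U i ω), V ω))
      ≤ (∑ i, ent μ (U i)) + ent μ V := by
    refine (ent_pair_le hPi hV).trans ?_
    exact add_le_add_left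
      (ent_pi_le N TU (fun i => inferInstance) (fun i => inferInstance)
        (fun i => inferInstance) U hU) _
  have step4 : (∑ i, ent μ (U i)) + ent μ V ≤ (∑ i, a i) + b :=
    add_le_add (Finset.sum_le_sum fun i _ => hUcap i) hVcap
  have hWeq : ent μ (fun ω => ((fun i => U i ω), V ω)) = (∑ i, a i) + b :=
    le_antisymm (step3.trans step4) (step1 ▸ step2)
  have heq : (∑ i, ent μ (U i)) + ent μ V = (∑ i, a i) + b :=
    le_antisymm step4 (hWeq ▸ step3)
  have hVnn : 0 ≤ b - ent μ V := by linarith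
  have hSnn : 0 ≤ ∑ i, (a i - ent μ (U i)) :=
    Finset.sum_nonneg fun i _ => by linarith [hUcap i]
  have hsum0 : (∑ i, (a i - ent μ (U i))) + (b - ent μ V) = 0 := by
    rw [Finset.sum_sub_distrib]
    linarith
  have hS0 : ∑ i, (a i - ent μ (U i)) = 0 := by linarith
  have hV0 : ent μ V = b := by linarith
  refine ⟨fun i => ?_, hV0, hWeq⟩
  have := (Finset.sum_eq_zero_iff_of_nonneg
    (fun i _ => by linarith [hUcap i] : ∀ i ∈ Finset.univ, 0 ≤ a i - ent μ (U i))).mp hS0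
    i (Finset.mem_univ i)
  linarith
end
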